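/- arXiv:2408.12951 — 6 statements merged into one kernel-verified Lean document; each statement's English description precedes it below -/
import Mathlib

section
/- For every finite simple graph G with at least one vertex, z'(G) = z(G); that is, the largest k for which G has a Grundy coloring using k colors containing a b-vertex u such that for every color j ≠ c(u) with 1 ≤ j ≤ k, u is adjacent to a b-vertex of color j, equals the largest k for which G has a Grundy coloring using k colors containing such a b-vertex whose own color is k. -/
variable {V : Type*} {W : Type*}

/-- A proper coloring of `G` using colors `{1, …, k}`: colors lie in `{1,…,k}`,
adjacent vertices get different colors, and every color in `{1,…,k}` is used. -/
def IsProperKColoring (G : SimpleGraph V) (k : ℕ) (c : V → ℕ) : Prop :=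
  (∀ v, c v ∈ Set.Icc 1 k) ∧
  (∀ u v, G.Adj u v → c u ≠ c v) ∧
  (∀ j ∈ Set.Icc 1 k, ∃ v, c v = j)

/-- `u` is a b-vertex: every color `j ∈ {1,…,k}` with `j ≠ c u` appears on a neighbor of `u`. -/
def IsBVertex (G : SimpleGraph V) (k : ℕ) (c : V → ℕ) (u : V) : Prop :=
  ∀ j ∈ Set.Icc 1 k, j ≠ c u → ∃ w, G.Adj u w ∧ c w = j

/-- `u` is a nice vertex: it is a b-vertex and for every color `j ≠ c u` in `{1,…,k}`
it has a b-vertex neighbor of color `j`. -/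
def IsNiceVertex (G : SimpleGraph V) (k : ℕ) (c : V → ℕ) (u : V) : Prop :=
  IsBVertex G k c u ∧
  ∀ j ∈ Set.Icc 1 k, j ≠ c u → ∃ w, G.Adj u w ∧ c w = j ∧ IsBVertex G k c w

/-- A Grundy coloring using `k` colors: proper, and every vertex of color `j` has a
neighbor of each smaller color `i ≥ 1`. -/
def IsGrundyColoring (G : SimpleGraph V) (k : ℕ) (c : V → ℕ) : Prop :=
  IsProperKColoring G k c ∧
  ∀ i j : ℕ, 1 ≤ i → i < j → j ≤ k → ∀ v, c v = j → ∃ w, G.Adj v w ∧ c w = i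

/-- A z-coloring: a Grundy coloring with a nice vertex of (top) color `k`. -/
def IsZColoring (G : SimpleGraph V) (k : ℕ) (c : V → ℕ) : Prop :=
  IsGrundyColoring G k c ∧ ∃ u, c u = k ∧ IsNiceVertex G k c u

/-- A b*-coloring: a proper coloring with a nice vertex of (top) color `k`. -/
def IsBStarColoring (G : SimpleGraph V) (k : ℕ) (c : V → ℕ) : Prop :=
  IsProperKColoring G k c ∧ ∃ u, c u = k ∧ IsNiceVertex G k c u

/-- The z-chromatic number: largest `k` admitting a z-coloring with `k` colors. -/
noncomputable def zNum (G : SimpleGraph V) : ℕ :=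
  sSup {k | ∃ c : V → ℕ, IsZColoring G k c}

/-- The b*-chromatic number: largest `k` admitting a b*-coloring with `k` colors. -/
noncomputable def bStar (G : SimpleGraph V) : ℕ :=
  sSup {k | ∃ c : V → ℕ, IsBStarColoring G k c}

/-- `m*(G)`: the largest `k` such that some vertex `u` has `k` distinct neighbors,
each of degree at least `k`. -/
noncomputable def mStar (G : SimpleGraph V) : ℕ :=
  sSup {k | ∃ (u : V) (s : Finset V), (↑s : Set V) ⊆ G.neighborSet u ∧ s.card = k ∧
    ∀ v ∈ s, k ≤ (G.neighborSet v).ncard}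

/-- The clique number `ω(G)`. -/
noncomputable def omegaNum (G : SimpleGraph V) : ℕ :=
  sSup {n | ∃ s : Finset V, G.IsNClique n s}
/-- `z'(G)`: the largest `k` admitting a Grundy coloring with `k` colors containing a
b-vertex `u` such that for every `j ∈ {1,…,k}` with `j ≠ c u`, `u` has a b-vertex
neighbor of color `j` (the nice vertex need not have the top color). -/
noncomputable def zPrime (G : SimpleGraph V) : ℕ :=
  sSup {k | ∃ c : V → ℕ, IsGrundyColoring G k c ∧ ∃ u, IsNiceVertex G k c u}

lemma exists_zColoring_of_nice (G : SimpleGraph V) (k : ℕ) (c : V → ℕ)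
    (hg : IsGrundyColoring G k c) (u : V) (hu : IsNiceVertex G k c u) :
    ∃ c' : V → ℕ, IsZColoring G k c' := by
  classical
  obtain ⟨⟨hrange, hproper, hsurj⟩, hgrundy⟩ := hg
  obtain ⟨hbu, hnice⟩ := hu
  by_cases heq : c u = k
  · exact ⟨c, ⟨⟨hrange, hproper, hsurj⟩, hgrundy⟩, u, heq, hbu, hnice⟩
  have hrange' : ∀ v, 1 ≤ c v ∧ c v ≤ k := by
    intro v; have := hrange v; rw [Set.mem_Icc] at this; exact this
  set t := c u with htdef
  have ht1 : 1 ≤ t := (hrange' u).1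
  have hlt : t < k := lt_of_le_of_ne (hrange' u).2 heq
  -- `Full v` : v sees all colors except t on its neighbors
  set Full : V → Prop :=
    fun v => ∀ j, 1 ≤ j → j ≤ k → j ≠ t → ∃ w, G.Adj v w ∧ c w = j with hFullDef
  set miss : V → ℕ :=
    fun v => sInf {j | t < j ∧ ∀ w, G.Adj v w → c w ≠ j} with hmissDef
  have hFullu : Full u := by
    intro j hj1 hjk hjt
    exact hbu j (Set.mem_Icc.mpr ⟨hj1, hjk⟩) hjt
  -- key facts about `miss` for non-full vertices of color t
  have hmissKey : ∀ v, c v = t → ¬ Full v →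
      t < miss v ∧ (∀ w, G.Adj v w → c w ≠ miss v) ∧ miss v ≤ k ∧
        ∀ j, t < j → j < miss v → ∃ w, G.Adj v w ∧ c w = j := by
    intro v hv hnf
    have hex : ∃ j, (t < j ∧ ∀ w, G.Adj v w → c w ≠ j) ∧ j ≤ k := by
      simp only [hFullDef] at hnf
      push_neg at hnf
      obtain ⟨j, hj1, hjk, hjt, hjn⟩ := hnf
      have htj : t < j := by
        rcases lt_or_gt_of_ne hjt with h | h
        · exfalso
          obtain ⟨w, hw, hcw⟩ := hgrundy j t hj1 h (le_of_lt hlt) v hv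
          exact hjn w hw hcw
        · exact h
      exact ⟨j, ⟨htj, hjn⟩, hjk⟩
    obtain ⟨j0, hj0, hj0k⟩ := hex
    have hne : {j | t < j ∧ ∀ w, G.Adj v w → c w ≠ j}.Nonempty := ⟨j0, hj0⟩
    have hmem := Nat.sInf_mem hne
    have hle : miss v ≤ k := le_trans (Nat.sInf_le hj0) hj0k
    refine ⟨hmem.1, hmem.2, hle, ?_⟩
    intro j htj hjm
    have : j ∉ {j | t < j ∧ ∀ w, G.Adj v w → c w ≠ j} := Nat.notMem_of_lt_sInf hjm
    simp only [Set.mem_setOf_eq, not_and, not_forall] at this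
    obtain ⟨w, hw, hcw⟩ := this htj
    exact ⟨w, hw, not_not.mp hcw⟩
  -- the new coloring
  set c' : V → ℕ :=
    fun v => if c v < t then c v else if t < c v then c v - 1
      else if Full v then k else miss v - 1 with hc'Def
  have hc'lt : ∀ v, c v < t → c' v = c v := by
    intro v h; simp only [hc'Def]; rw [if_pos h]
  have hc'gt : ∀ v, t < c v → c' v = c v - 1 := by
    intro v h; simp only [hc'Def]; rw [if_neg (by omega), if_pos h]
  have hc'full : ∀ v, c v = t → Full v → c' v = k := by
    intro v h hf; simp only [hc'Def]
    rw [if_neg (by omega), if_neg (by omega), if_pos hf]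
  have hc'miss : ∀ v, c v = t → ¬ Full v → c' v = miss v - 1 := by
    intro v h hf; simp only [hc'Def]
    rw [if_neg (by omega), if_neg (by omega), if_neg hf]
  -- range of c'
  have hc'range : ∀ v, 1 ≤ c' v ∧ c' v ≤ k := by
    intro v
    rcases lt_trichotomy (c v) t with h | h | h
    · rw [hc'lt v h]
      exact ⟨(hrange' v).1, (hrange' v).2⟩
    · by_cases hf : Full v
      · rw [hc'full v h hf]; omega
      · rw [hc'miss v h hf]
        obtain ⟨h1, _, h3, _⟩ := hmissKey v h hf
        omega
    · rw [hc'gt v h]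
      have := (hrange' v).2
      omega
  have hc'rangeIcc : ∀ v, c' v ∈ Set.Icc 1 k := fun v => Set.mem_Icc.mpr (hc'range v)
  -- for vertices of color ≠ t, new color determined; helper to realize new colors
  have hreal : ∀ w s, 1 ≤ s → s ≤ k - 1 →
      (c w = if s < t then s else s + 1) → c' w = s := by
    intro w s hs1 hsk hw
    by_cases h : s < t
    · rw [if_pos h] at hw
      rw [hc'lt w (hw ▸ h)]; exact hw
    · rw [if_neg h] at hw
      have : t < c w := by omega
      rw [hc'gt w this]; omega
  -- properness
  have hproper' : ∀ x y, G.Adj x y → c' x ≠ c' y := by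
    intro x y hxy
    have hne := hproper x y hxy
    rcases lt_trichotomy (c x) t with hx | hx | hx <;>
      rcases lt_trichotomy (c y) t with hy | hy | hy
    · rw [hc'lt x hx, hc'lt y hy]; exact hne
    · -- c x < t, c y = t
      rw [hc'lt x hx]
      by_cases hf : Full y
      · rw [hc'full y hy hf]; omega
      · rw [hc'miss y hy hf]
        obtain ⟨h1, _, _, _⟩ := hmissKey y hy hf
        omega
    · rw [hc'lt x hx, hc'gt y hy]; omega
    · -- c x = t, c y < t
      rw [hc'lt y hy]
      by_cases hf : Full x
      · rw [hc'full x hx hf]; omega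
      · rw [hc'miss x hx hf]
        obtain ⟨h1, _, _, _⟩ := hmissKey x hx hf
        omega
    · exact absurd (hx.trans hy.symm) hne
    · -- c x = t, c y > t
      by_cases hf : Full x
      · rw [hc'full x hx hf, hc'gt y hy]
        have := (hrange' y).2
        omega
      · rw [hc'miss x hx hf, hc'gt y hy]
        obtain ⟨h1, h2, _, _⟩ := hmissKey x hx hf
        intro hcon
        have : c y = miss x := by omega
        exact h2 y hxy this
    · -- c x > t, c y < t
      rw [hc'gt x hx, hc'lt y hy]; omega
    · -- c x > t, c y = t
      by_cases hf : Full y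
      · rw [hc'full y hy hf, hc'gt x hx]
        have := (hrange' x).2
        omega
      · rw [hc'miss y hy hf, hc'gt x hx]
        obtain ⟨h1, h2, _, _⟩ := hmissKey y hy hf
        intro hcon
        have : c x = miss y := by omega
        exact h2 x hxy.symm this
    · rw [hc'gt x hx, hc'gt y hy]; omega
  -- surjectivity
  have hsurj' : ∀ j ∈ Set.Icc 1 k, ∃ v, c' v = j := by
    intro j hj
    rw [Set.mem_Icc] at hj
    by_cases hjk : j = k
    · exact ⟨u, hjk ▸ hc'full u rfl hFullu⟩
    · by_cases h : j < t
      · obtain ⟨v, hv⟩ := hsurj j (Set.mem_Icc.mpr ⟨hj.1, hj.2⟩)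
        exact ⟨v, hreal v j hj.1 (by omega) (by rw [if_pos h]; exact hv)⟩
      · obtain ⟨v, hv⟩ := hsurj (j + 1) (Set.mem_Icc.mpr ⟨by omega, by omega⟩)
        exact ⟨v, hreal v j hj.1 (by omega) (by rw [if_neg h]; exact hv)⟩
  -- Grundy property
  have hgrundy' : ∀ i j : ℕ, 1 ≤ i → i < j → j ≤ k → ∀ v, c' v = j →
      ∃ w, G.Adj v w ∧ c' w = i := by
    intro i j hi hij hjk v hv
    have hik : i ≤ k - 1 := by omega
    rcases lt_trichotomy (c v) t with h | h | h
    · rw [hc'lt v h] at hv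
      obtain ⟨w, hw, hcw⟩ := hgrundy i (c v) hi (by omega) (by omega) v rfl
      exact ⟨w, hw, hreal w i hi hik (by rw [if_pos (by omega)]; exact hcw)⟩
    · by_cases hf : Full v
      · rw [hc'full v h hf] at hv
        by_cases hit : i < t
        · obtain ⟨w, hw, hcw⟩ := hf i hi (by omega) (by omega)
          exact ⟨w, hw, hreal w i hi hik (by rw [if_pos hit]; exact hcw)⟩
        · obtain ⟨w, hw, hcw⟩ := hf (i + 1) (by omega) (by omega) (by omega)
          exact ⟨w, hw, hreal w i hi hik (by rw [if_neg hit]; exact hcw)⟩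
      · rw [hc'miss v h hf] at hv
        obtain ⟨h1, h2, h3, h4⟩ := hmissKey v h hf
        by_cases hit : i < t
        · obtain ⟨w, hw, hcw⟩ := hgrundy i t hi (by omega) (by omega) v h
          exact ⟨w, hw, hreal w i hi hik (by rw [if_pos hit]; exact hcw)⟩
        · obtain ⟨w, hw, hcw⟩ := h4 (i + 1) (by omega) (by omega)
          exact ⟨w, hw, hreal w i hi hik (by rw [if_neg hit]; exact hcw)⟩
    · rw [hc'gt v h] at hv
      have hcvk := (hrange' v).2
      by_cases hit : i < t
      · obtain ⟨w, hw, hcw⟩ := hgrundy i (c v) hi (by omega) (by omega) v rfl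
        exact ⟨w, hw, hreal w i hi hik (by rw [if_pos hit]; exact hcw)⟩
      · obtain ⟨w, hw, hcw⟩ := hgrundy (i + 1) (c v) (by omega) (by omega) (by omega) v rfl
        exact ⟨w, hw, hreal w i hi hik (by rw [if_neg hit]; exact hcw)⟩
  have hc'u : c' u = k := hc'full u rfl hFullu
  -- u is a b-vertex for c'
  have hbu' : IsBVertex G k c' u := by
    intro s hs hsne
    rw [Set.mem_Icc] at hs
    rw [hc'u] at hsne
    by_cases hst : s < t
    · obtain ⟨w, hw, hcw⟩ := hFullu s hs.1 hs.2 (by omega)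
      exact ⟨w, hw, hreal w s hs.1 (by omega) (by rw [if_pos hst]; exact hcw)⟩
    · obtain ⟨w, hw, hcw⟩ := hFullu (s + 1) (by omega) (by omega) (by omega)
      exact ⟨w, hw, hreal w s hs.1 (by omega) (by rw [if_neg hst]; exact hcw)⟩
  refine ⟨c', ⟨⟨hc'rangeIcc, hproper', hsurj'⟩, hgrundy'⟩, u, hc'u, hbu', ?_⟩
  -- nice: for each s < k, a b-vertex (for c') neighbor of u with new color s
  intro s hs hsne
  rw [Set.mem_Icc] at hs
  rw [hc'u] at hsne
  have hsk : s ≤ k - 1 := by omega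
  set j0 : ℕ := if s < t then s else s + 1 with hj0def
  have hj0 : 1 ≤ j0 ∧ j0 ≤ k ∧ j0 ≠ t := by
    by_cases h : s < t <;> simp only [hj0def, if_pos, if_neg, h, if_true, if_false] <;> omega
  obtain ⟨w, hw, hcw, hbw⟩ :=
    hnice j0 (Set.mem_Icc.mpr ⟨hj0.1, hj0.2.1⟩) hj0.2.2
  have hc'w : c' w = s := hreal w s hs.1 hsk hcw
  refine ⟨w, hw, hc'w, ?_⟩
  -- w is a b-vertex for c'
  intro r hr hrne
  rw [Set.mem_Icc] at hr
  rw [hc'w] at hrne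
  by_cases hrk : r = k
  · exact ⟨u, hw.symm, hrk ▸ hc'u⟩
  · set r0 : ℕ := if r < t then r else r + 1 with hr0def
    have hr0 : 1 ≤ r0 ∧ r0 ≤ k ∧ r0 ≠ j0 := by
      by_cases h : r < t <;> by_cases h' : s < t <;>
        simp only [hj0def, hr0def, h, h', if_true, if_false] <;> omega
    obtain ⟨x, hx, hcx⟩ :=
      hbw r0 (Set.mem_Icc.mpr ⟨hr0.1, hr0.2.1⟩) (hcw ▸ hr0.2.2)
    exact ⟨x, hx, hreal x r hr.1 (by omega) (by rw [hr0def] at hcx; exact hcx)⟩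

/-- for every finite simple graph with at least one vertex, `z'(G) = z(G)`. -/
theorem zPrime_eq_zNum [Fintype V] [Nonempty V] (G : SimpleGraph V) :
    zPrime G = zNum G := by
  unfold zPrime zNum
  congr 1
  ext k
  constructor
  · rintro ⟨c, hg, u, hu⟩
    obtain ⟨c', hc'⟩ := exists_zColoring_of_nice G k c hg u hu
    exact ⟨c', hc'⟩
  · rintro ⟨c, hg, u, _, hu⟩
    exact ⟨c, hg, u, hu⟩
end

section
/- For every finite simple graph G with at least one vertex, b*(G) ≤ m*(G) + 1. -/
variable {V : Type*} {W : Type*}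

/-- for every finite simple graph with at least one vertex,
`b*(G) ≤ m*(G) + 1`. -/
theorem bStar_le_mStar_add_one [Fintype V] [Nonempty V] (G : SimpleGraph V) :
    bStar G ≤ mStar G + 1 := by
  classical
  apply csSup_le'
  rintro k ⟨c, hprop, u, hcu, hb, hnb⟩
  by_cases hk1 : k ≤ 1
  · omega
  push_neg at hk1
  -- helper: any b-vertex with color in Icc 1 k has degree ≥ k-1
  have hdeg : ∀ w : V, IsBVertex G k c w → c w ∈ Set.Icc 1 k →
      k - 1 ≤ (G.neighborSet w).ncard := by
    intro w hw hcw
    set F : ℕ → V := fun i => if h : i ∈ Set.Icc 1 k ∧ i ≠ c w then (hw i h.1 h.2).choose else w with hF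
    have hFspec : ∀ i ∈ (Finset.Icc 1 k).erase (c w), G.Adj w (F i) ∧ c (F i) = i := by
      intro i hi
      rw [Finset.mem_erase, Finset.mem_Icc] at hi
      have h1 : i ∈ Set.Icc 1 k := ⟨hi.2.1, hi.2.2⟩
      have : F i = (hw i h1 hi.1).choose := dif_pos ⟨h1, hi.1⟩
      rw [this]
      exact (hw i h1 hi.1).choose_spec
    set T := ((Finset.Icc 1 k).erase (c w)).image F with hT
    have hinj : Set.InjOn F ↑((Finset.Icc 1 k).erase (c w)) := by
      intro a ha b hb hab
      rw [Finset.mem_coe] at ha hb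
      have := (hFspec a ha).2
      rw [hab, (hFspec b hb).2] at this
      exact this.symm
    have hcard : T.card = k - 1 := by
      rw [hT, Finset.card_image_of_injOn hinj, Finset.card_erase_of_mem
        (Finset.mem_Icc.mpr ⟨hcw.1, hcw.2⟩), Nat.card_Icc]
      omega
    have hsub : (↑T : Set V) ⊆ G.neighborSet w := by
      intro x hx
      simp only [hT, Finset.coe_image, Set.mem_image, Finset.mem_coe] at hx
      obtain ⟨i, hi, rfl⟩ := hx
      exact (hFspec i hi).1
    calc k - 1 = (↑T : Set V).ncard := by rw [Set.ncard_coe_finset, hcard]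
    _ ≤ (G.neighborSet w).ncard := Set.ncard_le_ncard hsub (Set.toFinite _)
  -- k - 1 belongs to the mStar set
  have hmem : (k - 1) ∈ {m | ∃ (u : V) (s : Finset V), (↑s : Set V) ⊆ G.neighborSet u ∧
      s.card = m ∧ ∀ v ∈ s, m ≤ (G.neighborSet v).ncard} := by
    set W : ℕ → V := fun j => if h : j ∈ Set.Icc 1 k ∧ j ≠ c u then (hnb j h.1 h.2).choose else u with hW
    have hWspec : ∀ j ∈ Finset.Icc 1 (k-1),
        G.Adj u (W j) ∧ c (W j) = j ∧ IsBVertex G k c (W j) := by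
      intro j hj
      rw [Finset.mem_Icc] at hj
      have h1 : j ∈ Set.Icc 1 k := ⟨hj.1, by omega⟩
      have h2 : j ≠ c u := by rw [hcu]; omega
      have : W j = (hnb j h1 h2).choose := dif_pos ⟨h1, h2⟩
      rw [this]
      exact (hnb j h1 h2).choose_spec
    refine ⟨u, (Finset.Icc 1 (k-1)).image W, ?_, ?_, ?_⟩
    · intro x hx
      simp only [Finset.coe_image, Set.mem_image, Finset.mem_coe] at hx
      obtain ⟨j, hj, rfl⟩ := hx
      exact (hWspec j hj).1
    · have hinj : Set.InjOn W ↑(Finset.Icc 1 (k-1)) := by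
        intro a ha b hb hab
        rw [Finset.mem_coe] at ha hb
        have := (hWspec a ha).2.1
        rw [hab, (hWspec b hb).2.1] at this
        exact this.symm
      rw [Finset.card_image_of_injOn hinj, Nat.card_Icc]
      omega
    · intro v hv
      obtain ⟨j, hj, rfl⟩ := Finset.mem_image.mp hv
      rw [Finset.mem_Icc] at hj
      refine hdeg _ (hWspec j (Finset.mem_Icc.mpr hj)).2.2 ?_
      rw [(hWspec j (Finset.mem_Icc.mpr hj)).2.1]
      exact ⟨hj.1, by omega⟩
  have hbdd : BddAbove {m | ∃ (u : V) (s : Finset V), (↑s : Set V) ⊆ G.neighborSet u ∧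
      s.card = m ∧ ∀ v ∈ s, m ≤ (G.neighborSet v).ncard} := by
    refine ⟨Fintype.card V, ?_⟩
    rintro m ⟨u, s, _, rfl, _⟩
    exact Finset.card_le_univ s
  have := le_csSup hbdd hmem
  unfold mStar
  omega
end

section
/- If a finite simple graph G is the disjoint union of graphs G_1, …, G_p (p ≥ 1, each G_i with at least one vertex), then z(G) = max_{1 ≤ i ≤ p} z(G_i). -/
variable {V : Type*} {W : Type*}

section ZAux

lemma proper_le_card [Fintype V] {G : SimpleGraph V} {k : ℕ} {c : V → ℕ}
    (h : IsProperKColoring G k c) : k ≤ Fintype.card V := by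
  obtain ⟨-, -, hsurj⟩ := h
  have h2 : ∀ j : Fin k, ∃ v, c v = j.1 + 1 := fun j =>
    hsurj (j.1 + 1) (Set.mem_Icc.2 ⟨by omega, by omega⟩)
  choose f hf using h2
  have hinj : Function.Injective f := by
    intro a b hab
    have h1 := hf a
    rw [hab, hf b] at h1
    exact Fin.ext (by omega)
  simpa using Fintype.card_le_of_injective f hinj

lemma exists_proper [Fintype V] [Nonempty V] (G : SimpleGraph V) :
    ∃ c, IsProperKColoring G (Fintype.card V) c := by
  refine ⟨fun v => (Fintype.equivFin V v : ℕ) + 1, fun v => ?_, ?_, ?_⟩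
  · dsimp only
    have := (Fintype.equivFin V v).2
    exact Set.mem_Icc.2 ⟨by omega, by omega⟩
  · intro u v huv h
    dsimp only at h
    have h2 : (Fintype.equivFin V u) = Fintype.equivFin V v := Fin.ext (by omega)
    exact G.ne_of_adj huv ((Fintype.equivFin V).injective h2)
  · intro j hj
    rw [Set.mem_Icc] at hj
    refine ⟨(Fintype.equivFin V).symm ⟨j - 1, by omega⟩, ?_⟩
    dsimp only
    rw [Equiv.apply_symm_apply]
    dsimp only
    omega

lemma exists_isZColoring [Fintype V] [Nonempty V] (G : SimpleGraph V) :
    ∃ k c, IsZColoring G k c := by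
  classical
  set n := Fintype.card V with hn
  set S := {k | ∃ c : V → ℕ, IsProperKColoring G k c} with hSdef
  have hSne : S.Nonempty := ⟨n, exists_proper G⟩
  set χ := sInf S with hχdef
  have hχS : χ ∈ S := Nat.sInf_mem hSne
  have hmin : ∀ k, k < χ → ¬ ∃ c : V → ℕ, IsProperKColoring G k c := by
    intro k hk hke
    have h2 : χ ≤ k := Nat.sInf_le (hke : k ∈ S)
    omega
  obtain ⟨c0, hc0⟩ := hχS
  have hχ1 : 1 ≤ χ := by
    obtain ⟨v⟩ := ‹Nonempty V›
    have := hc0.1 v; rw [Set.mem_Icc] at this; omega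
  set B := n + 1 with hB
  have hB2 : 2 ≤ B := by have : 0 < n := Fintype.card_pos; omega
  set Wt : (V → ℕ) → ℕ := fun c => ∑ v, B ^ (χ - c v) with hWt
  set T := {m | ∃ c : V → ℕ, IsProperKColoring G χ c ∧ Wt c = m} with hTdef
  have hTne : T.Nonempty := ⟨Wt c0, c0, hc0, rfl⟩
  obtain ⟨c, hc, hcW⟩ : ∃ c, IsProperKColoring G χ c ∧ Wt c = sInf T := Nat.sInf_mem hTne
  have hminW : ∀ c' : V → ℕ, IsProperKColoring G χ c' → Wt c ≤ Wt c' := by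
    intro c' h; rw [hcW]; exact Nat.sInf_le ⟨c', h, rfl⟩
  have hcol : ∀ v, 1 ≤ c v ∧ c v ≤ χ := by
    intro v; have := hc.1 v; rwa [Set.mem_Icc] at this
  have hprop : ∀ u v, G.Adj u v → c u ≠ c v := hc.2.1
  have hsurj : ∀ j, 1 ≤ j → j ≤ χ → ∃ v, c v = j := by
    intro j h1 h2; exact hc.2.2 j (Set.mem_Icc.2 ⟨h1, h2⟩)
  -- dropping an unused color is impossible
  have hdrop : ∀ (d : V → ℕ) (j : ℕ), 1 ≤ j → j ≤ χ →
      (∀ v, 1 ≤ d v ∧ d v ≤ χ) → (∀ u v, G.Adj u v → d u ≠ d v) →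
      (∀ t, 1 ≤ t → t ≤ χ → t ≠ j → ∃ v, d v = t) → (∀ v, d v ≠ j) → False := by
    intro d j hj1 hjχ hdcol hdprop hdsurj hdj
    refine hmin (χ - 1) (by omega) ⟨fun v => if d v < j then d v else d v - 1, ?_, ?_, ?_⟩
    · intro v
      have h1 := hdcol v; have h2 := hdj v
      dsimp only; split_ifs <;> (rw [Set.mem_Icc]; omega)
    · intro u v huv
      have h1 := hdcol u; have h2 := hdj u
      have h3 := hdcol v; have h4 := hdj v
      have h5 := hdprop u v huv
      dsimp only; split_ifs <;> omega
    · intro t ht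
      rw [Set.mem_Icc] at ht
      by_cases htj : t < j
      · obtain ⟨v, hv⟩ := hdsurj t (by omega) (by omega) (by omega)
        exact ⟨v, by dsimp only; rw [if_pos (by omega)]; omega⟩
      · obtain ⟨v, hv⟩ := hdsurj (t + 1) (by omega) (by omega) (by omega)
        exact ⟨v, by dsimp only; rw [if_neg (by omega)]; omega⟩
  have hup : ∀ v l, c v < l → l ≤ χ → ∃ w, G.Adj v w ∧ c w = l := by
    intro v l hvl hlχ
    by_contra hno
    push_neg at hno
    set c' := Function.update c v l with hc'def
    have hc'v : c' v = l := Function.update_self v l c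
    have hc'x : ∀ x, x ≠ v → c' x = c x := fun x hx => Function.update_of_ne hx l c
    have hc'col : ∀ x, 1 ≤ c' x ∧ c' x ≤ χ := by
      intro x
      by_cases hx : x = v
      · rw [hx, hc'v]; exact ⟨by have := (hcol v).1; omega, hlχ⟩
      · rw [hc'x x hx]; exact hcol x
    have hc'prop : ∀ x y, G.Adj x y → c' x ≠ c' y := by
      intro x y hadj
      by_cases hx : x = v <;> by_cases hy : y = v
      · rw [hx, hy] at hadj; exact absurd hadj (G.irrefl)
      · rw [hx] at hadj; rw [hx, hc'v, hc'x y hy]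
        intro h; exact hno y hadj h.symm
      · rw [hy] at hadj; rw [hy, hc'v, hc'x x hx]
        intro h; exact hno x (G.adj_symm hadj) h
      · rw [hc'x x hx, hc'x y hy]; exact hprop x y hadj
    by_cases hex : ∃ x, x ≠ v ∧ c x = c v
    · have hc'surj : ∀ t ∈ Set.Icc 1 χ, ∃ x, c' x = t := by
        intro t ht; rw [Set.mem_Icc] at ht
        by_cases htl : t = l
        · exact ⟨v, by rw [hc'v, htl]⟩
        · by_cases htv : t = c v
          · obtain ⟨x, hx, hcx⟩ := hex
            exact ⟨x, by rw [hc'x x hx]; omega⟩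
          · obtain ⟨x, hx⟩ := hsurj t ht.1 ht.2
            have hxv : x ≠ v := by intro h; subst h; omega
            exact ⟨x, by rw [hc'x x hxv]; omega⟩
      have hlt : Wt c' < Wt c := by
        rw [hWt]
        dsimp only
        rw [← Finset.add_sum_erase _ _ (Finset.mem_univ v),
            ← Finset.add_sum_erase _ _ (Finset.mem_univ v)]
        have hsum : ∑ x ∈ Finset.univ.erase v, B ^ (χ - c' x)
            = ∑ x ∈ Finset.univ.erase v, B ^ (χ - c x) := by
          apply Finset.sum_congr rfl
          intro x hx
          rw [hc'x x (Finset.ne_of_mem_erase hx)]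
        rw [hsum]
        have hpow : B ^ (χ - c' v) < B ^ (χ - c v) := by
          rw [hc'v]
          exact Nat.pow_lt_pow_right (by omega) (by have := (hcol v).1; omega)
        omega
      have := hminW c' ⟨fun x => Set.mem_Icc.2 (hc'col x), hc'prop, hc'surj⟩
      omega
    · push_neg at hex
      refine hdrop c' (c v) (hcol v).1 (hcol v).2 hc'col hc'prop ?_ ?_
      · intro t ht1 ht2 htj
        by_cases htl : t = l
        · exact ⟨v, by rw [hc'v, htl]⟩
        · obtain ⟨x, hx⟩ := hsurj t ht1 ht2
          have hxv : x ≠ v := by intro h; rw [h] at hx; exact htj hx.symm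
          exact ⟨x, by rw [hc'x x hxv]; omega⟩
      · intro x
        by_cases hx : x = v
        · subst hx; rw [hc'v]; omega
        · rw [hc'x x hx]; exact hex x hx
  obtain ⟨u, hu⟩ := hsurj 1 le_rfl hχ1
  have hnice : ∃ u, c u = 1 ∧ ∀ j', 2 ≤ j' → j' ≤ χ →
      ∃ w, G.Adj u w ∧ c w = j' ∧ ∀ i, 1 ≤ i → i < j' → ∃ x, G.Adj w x ∧ c x = i := by
    by_contra hcon
    push_neg at hcon
    obtain ⟨j', hj'2, hj'χ, hbad⟩ := hcon u hu
    have hχ2 : 2 ≤ χ := le_trans hj'2 hj'χ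
    have key : ∀ w, ∃ i, (G.Adj u w ∧ c w = j') →
        (2 ≤ i ∧ i < j' ∧ ∀ x, G.Adj w x → c x ≠ i) := by
      intro w
      by_cases h : G.Adj u w ∧ c w = j'
      · obtain ⟨i, hi1, hij, hno2⟩ := hbad w h.1 h.2
        refine ⟨i, fun _ => ⟨?_, hij, hno2⟩⟩
        rcases Nat.lt_or_ge i 2 with h2 | h2
        · exfalso
          have hi1' : i = 1 := by omega
          exact hno2 u (G.adj_symm h.1) (by rw [hu, hi1'])
        · exact h2
      · exact ⟨0, fun h' => absurd h' h⟩
    choose I hI using key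
    set c' : V → ℕ := fun x => if x = u then j'
      else if G.Adj u x ∧ c x = j' then I x else c x with hc'def
    have hc'u : c' u = j' := by simp [hc'def]
    have hc'w : ∀ x, x ≠ u → G.Adj u x → c x = j' → c' x = I x := by
      intro x hx h1 h2; rw [hc'def]; dsimp only; rw [if_neg hx, if_pos ⟨h1, h2⟩]
    have hc'o : ∀ x, x ≠ u → ¬(G.Adj u x ∧ c x = j') → c' x = c x := by
      intro x hx h1; rw [hc'def]; dsimp only; rw [if_neg hx, if_neg h1]
    have hIbd : ∀ x, G.Adj u x → c x = j' →
        2 ≤ I x ∧ I x < j' ∧ ∀ y, G.Adj x y → c y ≠ I x :=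
      fun x h1 h2 => hI x ⟨h1, h2⟩
    have hc'col : ∀ x, 1 ≤ c' x ∧ c' x ≤ χ := by
      intro x
      by_cases hx : x = u
      · rw [hx, hc'u]; omega
      · by_cases hP : G.Adj u x ∧ c x = j'
        · rw [hc'w x hx hP.1 hP.2]
          have := hIbd x hP.1 hP.2
          omega
        · rw [hc'o x hx hP]; exact hcol x
    have hc'prop : ∀ x y, G.Adj x y → c' x ≠ c' y := by
      have main : ∀ x y, G.Adj x y → x ≠ u → y ≠ u → c' x ≠ c' y := by
        intro x y hadj hx hy
        by_cases hPx : G.Adj u x ∧ c x = j' <;> by_cases hPy : G.Adj u y ∧ c y = j'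
        · exact absurd (hPx.2.trans hPy.2.symm) (hprop x y hadj)
        · rw [hc'w x hx hPx.1 hPx.2, hc'o y hy hPy]
          exact fun h => (hIbd x hPx.1 hPx.2).2.2 y hadj h.symm
        · rw [hc'o x hx hPx, hc'w y hy hPy.1 hPy.2]
          exact fun h => (hIbd y hPy.1 hPy.2).2.2 x (G.adj_symm hadj) h
        · rw [hc'o x hx hPx, hc'o y hy hPy]; exact hprop x y hadj
      have hu' : ∀ y, G.Adj u y → c' u ≠ c' y := by
        intro y hadj
        have hy : y ≠ u := fun h => G.irrefl (h ▸ hadj)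
        rw [hc'u]
        by_cases hPy : G.Adj u y ∧ c y = j'
        · rw [hc'w y hy hPy.1 hPy.2]
          have := hIbd y hPy.1 hPy.2; omega
        · rw [hc'o y hy hPy]
          intro h
          exact hPy ⟨hadj, h.symm⟩
      intro x y hadj
      by_cases hx : x = u
      · rw [hx]; exact hu' y (hx ▸ hadj)
      · by_cases hy : y = u
        · intro h; rw [hy] at h; exact hu' x (hy ▸ G.adj_symm hadj) h.symm
        · exact main x y hadj hx hy
    have hc'surj' : ∀ t, 1 ≤ t → t ≤ χ → t ≠ 1 → ∃ x, c' x = t := by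
      intro t h1 h2 h3
      by_cases htj : t = j'
      · exact ⟨u, by rw [hc'u, htj]⟩
      · obtain ⟨x, hx⟩ := hsurj t h1 h2
        have hxu : x ≠ u := by intro h; rw [h, hu] at hx; omega
        have hPx : ¬(G.Adj u x ∧ c x = j') := by
          rintro ⟨-, h4⟩; omega
        exact ⟨x, by rw [hc'o x hxu hPx]; exact hx⟩
    by_cases hex1 : ∃ x, x ≠ u ∧ c x = 1
    · have hc'surj : ∀ t ∈ Set.Icc 1 χ, ∃ x, c' x = t := by
        intro t ht; rw [Set.mem_Icc] at ht
        by_cases h3 : t = 1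
        · obtain ⟨x, hxu, hx1⟩ := hex1
          have hPx : ¬(G.Adj u x ∧ c x = j') := by rintro ⟨-, h4⟩; omega
          exact ⟨x, by rw [hc'o x hxu hPx]; omega⟩
        · exact hc'surj' t ht.1 ht.2 h3
      have hlt : Wt c' < Wt c := by
        rw [hWt]; dsimp only
        rw [← Finset.add_sum_erase _ _ (Finset.mem_univ u),
            ← Finset.add_sum_erase _ _ (Finset.mem_univ u)]
        rw [hc'u, hu]
        rw [← Finset.sum_filter_add_sum_filter_not (Finset.univ.erase u)
              (fun x => G.Adj u x ∧ c x = j') (fun x => B ^ (χ - c' x)),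
            ← Finset.sum_filter_add_sum_filter_not (Finset.univ.erase u)
              (fun x => G.Adj u x ∧ c x = j') (fun x => B ^ (χ - c x))]
        have heq : ∑ x ∈ (Finset.univ.erase u).filter (fun x => ¬(G.Adj u x ∧ c x = j')),
              B ^ (χ - c' x)
            = ∑ x ∈ (Finset.univ.erase u).filter (fun x => ¬(G.Adj u x ∧ c x = j')),
              B ^ (χ - c x) := by
          apply Finset.sum_congr rfl
          intro x hx
          rw [Finset.mem_filter] at hx
          rw [hc'o x (Finset.ne_of_mem_erase hx.1) hx.2]
        rw [heq]
        set s : Finset V := (Finset.univ.erase u).filter (fun x => G.Adj u x ∧ c x = j')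
          with hs
        have hcard : s.card ≤ n - 1 := by
          have h5 := Finset.card_filter_le (Finset.univ.erase u)
            (fun x => G.Adj u x ∧ c x = j')
          have h6 : (Finset.univ.erase u).card = n - 1 := by
            rw [Finset.card_erase_of_mem (Finset.mem_univ u), Finset.card_univ]
          rw [hs]; omega
        have hbound : ∀ x ∈ s, B ^ (χ - c' x) ≤ B ^ (χ - 2) := by
          intro x hx
          rw [hs, Finset.mem_filter] at hx
          rw [hc'w x (Finset.ne_of_mem_erase hx.1) hx.2.1 hx.2.2]
          have := hIbd x hx.2.1 hx.2.2
          exact Nat.pow_le_pow_right (by omega) (by omega)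
        have hsum1 : ∑ x ∈ s, B ^ (χ - c' x) ≤ s.card * B ^ (χ - 2) := by
          calc ∑ x ∈ s, B ^ (χ - c' x) ≤ ∑ _x ∈ s, B ^ (χ - 2) :=
                Finset.sum_le_sum hbound
            _ = s.card * B ^ (χ - 2) := by rw [Finset.sum_const, smul_eq_mul]
        have hj'pow : B ^ (χ - j') ≤ B ^ (χ - 2) :=
          Nat.pow_le_pow_right (by omega) (by omega)
        have hsplit : B ^ (χ - 1) = n * B ^ (χ - 2) + B ^ (χ - 2) := by
          have h2 : χ - 1 = (χ - 2) + 1 := by omega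
          rw [h2, pow_succ, hB]; ring
        have hp : 1 ≤ B ^ (χ - 2) := Nat.one_le_pow _ _ (by omega)
        have hn1 : s.card * B ^ (χ - 2) ≤ (n - 1) * B ^ (χ - 2) :=
          Nat.mul_le_mul_right _ hcard
        have hnn : 1 ≤ n := Fintype.card_pos
        have hmul : (n - 1) * B ^ (χ - 2) + B ^ (χ - 2) = n * B ^ (χ - 2) := by
          have h7 : n - 1 + 1 = n := by omega
          calc (n - 1) * B ^ (χ - 2) + B ^ (χ - 2) = (n - 1 + 1) * B ^ (χ - 2) := by ring
            _ = n * B ^ (χ - 2) := by rw [h7]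
        omega
      have := hminW c' ⟨fun x => Set.mem_Icc.2 (hc'col x), hc'prop, hc'surj⟩
      omega
    · push_neg at hex1
      refine hdrop c' 1 le_rfl hχ1 hc'col hc'prop ?_ ?_
      · intro t h1 h2 h3; exact hc'surj' t h1 h2 h3
      · intro x
        by_cases hx : x = u
        · rw [hx, hc'u]; omega
        · by_cases hPx : G.Adj u x ∧ c x = j'
          · rw [hc'w x hx hPx.1 hPx.2]; have := hIbd x hPx.1 hPx.2; omega
          · rw [hc'o x hx hPx]
            intro h; exact hex1 x hx h
  obtain ⟨u0, hu01, hu0n⟩ := hnice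
  set cz : V → ℕ := fun v => χ + 1 - c v with hcz
  have hczv : ∀ v, cz v = χ + 1 - c v := fun _ => rfl
  have hczcol : ∀ v, 1 ≤ cz v ∧ cz v ≤ χ := by
    intro v; have := hcol v; rw [hczv]; omega
  have hcu0 : cz u0 = χ := by rw [hczv, hu01]; omega
  refine ⟨χ, cz, ⟨⟨fun v => Set.mem_Icc.2 (hczcol v), ?_, ?_⟩, ?_⟩, u0, hcu0, ?_, ?_⟩
  · intro x y hadj
    have h1 := hcol x; have h2 := hcol y
    have h3 := hprop x y hadj
    rw [hczv, hczv]; omega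
  · intro j hj; rw [Set.mem_Icc] at hj
    obtain ⟨v, hv⟩ := hsurj (χ + 1 - j) (by omega) (by omega)
    exact ⟨v, by rw [hczv, hv]; omega⟩
  · intro i j h1 h2 h3 v hv
    have h4 := hcol v
    have hcv : c v = χ + 1 - j := by rw [hczv] at hv; omega
    obtain ⟨w, hw1, hw2⟩ := hup v (χ + 1 - i) (by omega) (by omega)
    exact ⟨w, hw1, by rw [hczv, hw2]; omega⟩
  · intro j hj hne
    rw [Set.mem_Icc] at hj
    rw [hcu0] at hne
    obtain ⟨w, hw1, hw2⟩ := hup u0 (χ + 1 - j) (by rw [hu01]; omega) (by omega)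
    exact ⟨w, hw1, by rw [hczv, hw2]; omega⟩
  · intro j hj hne
    rw [Set.mem_Icc] at hj
    rw [hcu0] at hne
    obtain ⟨w, hw1, hw2, hw3⟩ := hu0n (χ + 1 - j) (by omega) (by omega)
    have hczw : cz w = j := by rw [hczv, hw2]; omega
    refine ⟨w, hw1, hczw, ?_⟩
    intro t ht htne
    rw [Set.mem_Icc] at ht
    rw [hczw] at htne
    rcases Nat.lt_or_ge (χ + 1 - t) (χ + 1 - j) with hlt | hge
    · obtain ⟨x, hx1, hx2⟩ := hw3 (χ + 1 - t) (by omega) (by omega)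
      exact ⟨x, hx1, by rw [hczv, hx2]; omega⟩
    · obtain ⟨x, hx1, hx2⟩ := hup w (χ + 1 - t) (by rw [hw2]; omega) (by omega)
      exact ⟨x, hx1, by rw [hczv, hx2]; omega⟩

end ZAux

/-- if a finite simple graph `G` is the disjoint union of the (nonempty)
induced subgraphs `G[P⁻¹(i)]`, `i ∈ ι` (every edge of `G` joins vertices in the same
part, each part is nonempty, and there is at least one part), then
`z(G) = max_i z(G[P⁻¹(i)])`. -/
theorem zNum_disjoint_union {ι : Type*} [Fintype ι] [Nonempty ι] [DecidableEq ι]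
    [Fintype W] (G : SimpleGraph W) (P : W → ι)
    (hedge : ∀ u v, G.Adj u v → P u = P v)
    (hfib : ∀ i, ∃ w, P w = i) :
    zNum G = Finset.univ.sup fun i => zNum (G.induce {w | P w = i}) := by
  classical
  have hFin : ∀ i : ι, Fintype ↥{w | P w = i} := fun i => Fintype.ofFinite _
  have hNe : ∀ i : ι, Nonempty ↥{w | P w = i} := by
    intro i; obtain ⟨w, hw⟩ := hfib i; exact ⟨⟨w, hw⟩⟩
  have hbddi : ∀ i : ι, BddAbove {k | ∃ c : ↥{w | P w = i} → ℕ,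
      IsZColoring (G.induce {w | P w = i}) k c} := by
    intro i
    haveI := hFin i
    exact ⟨Fintype.card ↥{w | P w = i},
      fun k hk => by obtain ⟨c, hc⟩ := hk; exact proper_le_card hc.1.1⟩
  have hbddG : BddAbove {k | ∃ c : W → ℕ, IsZColoring G k c} :=
    ⟨Fintype.card W, fun k hk => by obtain ⟨c, hc⟩ := hk; exact proper_le_card hc.1.1⟩
  apply le_antisymm
  · rcases Set.eq_empty_or_nonempty {k | ∃ c : W → ℕ, IsZColoring G k c} with hE | hne
    · have h0 : zNum G = 0 := by rw [zNum, hE, csSup_empty]; rfl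
      rw [h0]; exact Nat.zero_le _
    · have hmem := Nat.sSup_mem hne hbddG
      obtain ⟨c, hc⟩ := hmem
      obtain ⟨⟨⟨hcol, hprop, hsurj⟩, hgr⟩, u, huk, hub, hun⟩ := hc
      have hmemNb : ∀ v x, G.Adj v x → P v = P u → P x = P u :=
        fun v x h hv => (hedge v x h).symm.trans hv
      have hres : IsZColoring (G.induce {w | P w = P u}) (zNum G) (fun x => c x.1) := by
        refine ⟨⟨⟨fun x => hcol x.1, fun a b hadj => hprop a.1 b.1 hadj, ?_⟩, ?_⟩,
          ⟨u, rfl⟩, huk, ?_, ?_⟩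
        · intro j hj
          by_cases hjk : j = zNum G
          · exact ⟨⟨u, rfl⟩, by rw [hjk]; exact huk⟩
          · obtain ⟨w, hw1, hw2⟩ := hub j hj (by rw [huk]; exact hjk)
            exact ⟨⟨w, hmemNb u w hw1 rfl⟩, hw2⟩
        · intro i j h1 h2 h3 v hv
          obtain ⟨w, hw1, hw2⟩ := hgr i j h1 h2 h3 v.1 hv
          exact ⟨⟨w, hmemNb v.1 w hw1 v.2⟩, hw1, hw2⟩
        · intro j hj hne
          obtain ⟨w, hw1, hw2⟩ := hub j hj hne
          exact ⟨⟨w, hmemNb u w hw1 rfl⟩, hw1, hw2⟩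
        · intro j hj hne
          obtain ⟨w, hw1, hw2, hw3⟩ := hun j hj hne
          refine ⟨⟨w, hmemNb u w hw1 rfl⟩, hw1, hw2, ?_⟩
          intro t ht htne
          obtain ⟨x, hx1, hx2⟩ := hw3 t ht htne
          exact ⟨⟨x, hmemNb w x hx1 (hmemNb u w hw1 rfl)⟩, hx1, hx2⟩
      have h1 : zNum G ≤ zNum (G.induce {w | P w = P u}) :=
        le_csSup (hbddi (P u)) ⟨_, hres⟩
      exact le_trans h1 (Finset.le_sup (f := fun i => zNum (G.induce {w | P w = i}))
        (Finset.mem_univ (P u)))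
  · obtain ⟨i0, -, hi0⟩ := Finset.exists_mem_eq_sup Finset.univ Finset.univ_nonempty
      (fun i => zNum (G.induce {w | P w = i}))
    rw [hi0]
    set K := zNum (G.induce {w | P w = i0}) with hKdef
    have hle : ∀ i : ι, zNum (G.induce {w | P w = i}) ≤ K := by
      intro i; rw [← hi0]
      exact Finset.le_sup (f := fun i => zNum (G.induce {w | P w = i})) (Finset.mem_univ i)
    have hall : ∀ i : ι, ∃ cc : ↥{w | P w = i} → ℕ,
        IsZColoring (G.induce {w | P w = i}) (zNum (G.induce {w | P w = i})) cc := by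
      intro i
      haveI := hFin i; haveI := hNe i
      obtain ⟨k', c', hk'⟩ := exists_isZColoring (G.induce {w | P w = i})
      have hne2 : Set.Nonempty {k | ∃ cc2 : ↥{w | P w = i} → ℕ,
          IsZColoring (G.induce {w | P w = i}) k cc2} := ⟨k', c', hk'⟩
      exact Nat.sSup_mem hne2 (hbddi i)
    choose cc hcc using hall
    set cG : W → ℕ := fun w => cc (P w) ⟨w, rfl⟩ with hcG
    have hcast : ∀ (w : W) (i : ι) (h : P w = i), cG w = cc i ⟨w, h⟩ := by
      intro w i h
      subst h
      rfl
    have hKmem : K ∈ {k | ∃ c : W → ℕ, IsZColoring G k c} := by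
      refine ⟨cG, ⟨⟨?_, ?_, ?_⟩, ?_⟩, ?_⟩
      · intro w
        have h1 := (hcc (P w)).1.1.1 ⟨w, rfl⟩
        rw [Set.mem_Icc] at h1 ⊢
        have h2 := hle (P w)
        rw [hcast w (P w) rfl]
        exact ⟨h1.1, le_trans h1.2 h2⟩
      · intro x y hadj
        have hPxy := hedge x y hadj
        rw [hcast x (P y) hPxy, hcast y (P y) rfl]
        exact (hcc (P y)).1.1.2.1 ⟨x, hPxy⟩ ⟨y, rfl⟩ hadj
      · intro j hj
        rw [Set.mem_Icc] at hj
        obtain ⟨x, hx⟩ := (hcc i0).1.1.2.2 j (Set.mem_Icc.2 ⟨hj.1, by rw [← hKdef]; exact hj.2⟩)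
        exact ⟨x.1, by rw [hcast x.1 i0 x.2]; exact hx⟩
      · intro i j h1 h2 h3 v hv
        rw [hcast v (P v) rfl] at hv
        have hjk : j ≤ zNum (G.induce {w | P w = P v}) := by
          have h4 := (hcc (P v)).1.1.1 ⟨v, rfl⟩; rw [Set.mem_Icc] at h4; omega
        obtain ⟨x, hx1, hx2⟩ := (hcc (P v)).1.2 i j h1 h2 hjk ⟨v, rfl⟩ hv
        refine ⟨x.1, hx1, ?_⟩
        rw [hcast x.1 (P v) x.2]
        exact hx2
      · obtain ⟨u0, hu0k, hu0b, hu0n⟩ := (hcc i0).2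
        refine ⟨u0.1, ?_, ?_, ?_⟩
        · rw [hcast u0.1 i0 u0.2, ← hKdef] at *
          rw [Subtype.eta] at *
          exact hu0k
        · intro j hj hne
          rw [hcast u0.1 i0 u0.2] at hne
          rw [hKdef] at hj
          obtain ⟨x, hx1, hx2⟩ := hu0b j hj (by rw [Subtype.eta] at hne; exact hne)
          exact ⟨x.1, hx1, by rw [hcast x.1 i0 x.2]; exact hx2⟩
        · intro j hj hne
          rw [hcast u0.1 i0 u0.2] at hne
          rw [hKdef] at hj
          obtain ⟨x, hx1, hx2, hx3⟩ := hu0n j hj (by rw [Subtype.eta] at hne; exact hne)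
          refine ⟨x.1, hx1, by rw [hcast x.1 i0 x.2]; exact hx2, ?_⟩
          intro t ht htne
          rw [hcast x.1 i0 x.2] at htne
          rw [hKdef] at ht
          obtain ⟨y, hy1, hy2⟩ := hx3 t ht (by rw [Subtype.eta] at htne; exact htne)
          exact ⟨y.1, hy1, by rw [hcast y.1 i0 y.2]; exact hy2⟩
    exact le_csSup hbddG hKmem
end

section
/- If a finite simple graph G is the disjoint union of graphs G_1, …, G_p (p ≥ 1, each G_i with at least one vertex), then b*(G) = max_{1 ≤ i ≤ p} b*(G_i). -/
variable {V : Type*} {W : Type*}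

-- Lemma A: every nonempty finite graph has a b*-coloring
lemma exists_bstar_coloring (G : SimpleGraph V) [Fintype V] [Nonempty V] :
    ∃ k c, IsBStarColoring G k c := by
  classical
  set n := Fintype.card V with hn
  set B := n + 1 with hB
  have hB1 : 1 < B := by
    have := Fintype.card_pos (α := V); omega
  set Φ : (V → ℕ) → ℕ := fun c => ∑ v, B ^ c v with hΦ
  set Good : (V → ℕ) → Prop :=
    fun c => (∀ v, 1 ≤ c v) ∧ ∀ u v, G.Adj u v → c u ≠ c v with hGoodDef
  have hex : ∃ N, ∃ c, Good c ∧ Φ c = N := by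
    refine ⟨_, fun v => (Fintype.equivFin V v).val + 1, ⟨fun v => le_add_self, ?_⟩, rfl⟩
    intro a b hab h
    have h' : ((Fintype.equivFin V) a : ℕ) + 1 = ((Fintype.equivFin V) b : ℕ) + 1 := h
    exact hab.ne ((Fintype.equivFin V).injective (Fin.ext (by omega)))
  obtain ⟨c, hGc, hΦc⟩ := Nat.find_spec hex
  have hmin : ∀ c', Good c' → Φ c ≤ Φ c' := by
    intro c' hc'
    rw [hΦc]
    exact Nat.find_min' hex ⟨c', hc', rfl⟩
  have hpos := hGc.1
  have hproper := hGc.2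
  -- Grundy property
  have hgr : ∀ v i, 1 ≤ i → i < c v → ∃ w, G.Adj v w ∧ c w = i := by
    intro v i hi1 hi2
    by_contra hcon
    push_neg at hcon
    set c' := Function.update c v i with hc'
    have hGood' : Good c' := by
      constructor
      · intro x
        rcases eq_or_ne x v with rfl | hx
        · simpa [hc'] using hi1
        · simp only [hc', Function.update_of_ne hx]
          exact hpos x
      · intro a b hab
        simp only [hc']
        rcases eq_or_ne a v with rfl | ha
        · have hb : b ≠ a := hab.ne'
          rw [Function.update_self, Function.update_of_ne hb]
          intro h
          exact hcon b hab h.symm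
        · rw [Function.update_of_ne ha]
          rcases eq_or_ne b v with rfl | hb2
          · rw [Function.update_self]
            intro h
            exact hcon a hab.symm h
          · rw [Function.update_of_ne hb2]
            exact hproper a b hab
    have hlt : Φ c' < Φ c := by
      have h1 : Φ c' = B ^ i + ∑ x ∈ Finset.univ.erase v, B ^ c' x := by
        show (∑ x, B ^ c' x) = _
        rw [← Finset.add_sum_erase _ _ (Finset.mem_univ v)]
        simp [hc']
      have h2 : Φ c = B ^ c v + ∑ x ∈ Finset.univ.erase v, B ^ c x := by
        show (∑ x, B ^ c x) = _
        rw [← Finset.add_sum_erase _ _ (Finset.mem_univ v)]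
      have h3 : ∑ x ∈ Finset.univ.erase v, B ^ c' x = ∑ x ∈ Finset.univ.erase v, B ^ c x := by
        apply Finset.sum_congr rfl
        intro x hx
        rw [hc', Function.update_of_ne (Finset.ne_of_mem_erase hx)]
      rw [h1, h2, h3]
      have : B ^ i < B ^ c v := Nat.pow_lt_pow_right hB1 hi2
      omega
    exact absurd (hmin c' hGood') (not_le.mpr hlt)
  -- top color
  set k := Finset.univ.sup c with hk
  obtain ⟨u, -, hu⟩ := Finset.exists_mem_eq_sup (Finset.univ : Finset V)
    Finset.univ_nonempty c
  have hcu : c u = k := hu.symm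
  have hle : ∀ v, c v ≤ k := fun v => Finset.le_sup (Finset.mem_univ v)
  have hproperK : IsProperKColoring G k c := by
    refine ⟨fun v => ⟨hpos v, hle v⟩, hproper, ?_⟩
    intro j hj
    rcases eq_or_lt_of_le hj.2 with rfl | hjk
    · exact ⟨u, hcu⟩
    · obtain ⟨w, -, hw⟩ := hgr u j hj.1 (hcu ▸ hjk)
      exact ⟨w, hw⟩
  have hbu : IsBVertex G k c u := by
    intro j hj hne
    have : j < c u := by
      rw [hcu]; rcases eq_or_lt_of_le hj.2 with rfl | h
      · exact absurd hcu.symm hne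
      · exact h
    exact hgr u j hj.1 this
  refine ⟨k, c, hproperK, u, hcu, hbu, ?_⟩
  -- nice
  intro j hj hnej
  by_contra hcon
  push_neg at hcon
  have hjk : j < k := lt_of_le_of_ne hj.2 (by rw [hcu] at hnej; exact hnej)
  -- for each bad neighbor, choose missing color
  have hmex : ∀ w, ∃ mw, (G.Adj u w ∧ c w = j) →
      (j < mw ∧ mw < k ∧ ∀ x, G.Adj w x → c x ≠ mw) := by
    intro w
    by_cases hw : G.Adj u w ∧ c w = j
    · have hnb : ¬ IsBVertex G k c w := hcon w hw.1 hw.2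
      rw [IsBVertex] at hnb
      push_neg at hnb
      obtain ⟨mw, hmw1, hmw2, hmw3⟩ := hnb
      refine ⟨mw, fun _ => ⟨?_, ?_, ?_⟩⟩
      · rcases lt_trichotomy mw j with h | h | h
        · exfalso
          obtain ⟨x, hx1, hx2⟩ := hgr w mw hmw1.1 (by omega : mw < c w)
          exact (hmw3 x hx1) hx2
        · exact absurd (h.trans hw.2.symm) hmw2
        · exact h
      · rcases eq_or_lt_of_le hmw1.2 with rfl | h
        · exact absurd hcu (hmw3 u hw.1.symm)
        · exact h
      · exact hmw3
    · exact ⟨0, fun h => absurd h hw⟩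
  choose m hmspec using hmex
  set c' : V → ℕ := fun v =>
    if v = u then j else if G.Adj u v ∧ c v = j then m v else c v with hc'
  have hc'u : c' u = j := by simp [hc']
  have hc'Nj : ∀ v, v ≠ u → (G.Adj u v ∧ c v = j) → c' v = m v := by
    intro v hv hcond; simp [hc', hv, hcond]
  have hc'other : ∀ v, v ≠ u → ¬(G.Adj u v ∧ c v = j) → c' v = c v := by
    intro v hv hcond; simp [hc', hv, hcond]
  have hGood' : Good c' := by
    constructor
    · intro v
      rcases eq_or_ne v u with rfl | hv
      · rw [hc'u]; exact hj.1
      · by_cases hcond : G.Adj u v ∧ c v = j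
        · rw [hc'Nj v hv hcond]
          have := (hmspec v hcond).1
          omega
        · rw [hc'other v hv hcond]; exact hpos v
    · intro a b hab
      have hne : a ≠ b := hab.ne
      by_cases ha : a = u
      · have hb : b ≠ u := fun h => hne (ha.trans h.symm)
        have hub : G.Adj u b := ha ▸ hab
        rw [ha, hc'u]
        by_cases hcond : G.Adj u b ∧ c b = j
        · rw [hc'Nj b hb hcond]
          exact ((hmspec b hcond).1).ne
        · rw [hc'other b hb hcond]
          intro h
          exact hcond ⟨hub, h.symm⟩
      · by_cases hb : b = u
        · have hua : G.Adj u a := hb ▸ hab.symm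
          rw [hb, hc'u]
          by_cases hcond : G.Adj u a ∧ c a = j
          · rw [hc'Nj a ha hcond]
            exact ((hmspec a hcond).1).ne'
          · rw [hc'other a ha hcond]
            intro h
            exact hcond ⟨hua, h⟩
        · by_cases hca : G.Adj u a ∧ c a = j
          · by_cases hcb : G.Adj u b ∧ c b = j
            · exact absurd (hca.2.trans hcb.2.symm) (hproper a b hab)
            · rw [hc'Nj a ha hca, hc'other b hb hcb]
              exact ((hmspec a hca).2.2 b hab).symm
          · by_cases hcb : G.Adj u b ∧ c b = j
            · rw [hc'other a ha hca, hc'Nj b hb hcb]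
              exact (hmspec b hcb).2.2 a hab.symm
            · rw [hc'other a ha hca, hc'other b hb hcb]
              exact hproper a b hab
  have hlt : Φ c' < Φ c := by
    have h1 : Φ c' = B ^ j + ∑ x ∈ Finset.univ.erase u, B ^ c' x := by
      show (∑ x, B ^ c' x) = _
      rw [← Finset.add_sum_erase _ _ (Finset.mem_univ u), hc'u]
    have h2 : Φ c = B ^ k + ∑ x ∈ Finset.univ.erase u, B ^ c x := by
      show (∑ x, B ^ c x) = _
      rw [← Finset.add_sum_erase _ _ (Finset.mem_univ u), hcu]
    have hterm : ∀ x ∈ Finset.univ.erase u, B ^ c' x ≤ B ^ c x + B ^ (k - 1) := by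
      intro x hx
      have hxu : x ≠ u := Finset.ne_of_mem_erase hx
      by_cases hcond : G.Adj u x ∧ c x = j
      · rw [hc'Nj x hxu hcond]
        have h1 := (hmspec x hcond).2.1
        have : B ^ m x ≤ B ^ (k - 1) :=
          Nat.pow_le_pow_right (by omega) (by omega)
        omega
      · rw [hc'other x hxu hcond]
        omega
    have hsum : ∑ x ∈ Finset.univ.erase u, B ^ c' x ≤
        (∑ x ∈ Finset.univ.erase u, B ^ c x) + (n - 1) * B ^ (k - 1) := by
      calc ∑ x ∈ Finset.univ.erase u, B ^ c' x
          ≤ ∑ x ∈ Finset.univ.erase u, (B ^ c x + B ^ (k - 1)) :=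
            Finset.sum_le_sum hterm
        _ = (∑ x ∈ Finset.univ.erase u, B ^ c x) + (n - 1) * B ^ (k - 1) := by
            rw [Finset.sum_add_distrib, Finset.sum_const, Finset.card_erase_of_mem
              (Finset.mem_univ u), Finset.card_univ, smul_eq_mul]
    have hkey : B ^ j + (n - 1) * B ^ (k - 1) < B ^ k := by
      have e1 : B ^ j ≤ B ^ (k - 1) := Nat.pow_le_pow_right (by omega) (by omega)
      have e2 : B ^ k = B ^ (k - 1) * B := by
        rw [← pow_succ]
        congr 1
        omega
      have e3 : 0 < B ^ (k - 1) := Nat.pow_pos (by omega)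
      have hn1 : 1 ≤ n := Fintype.card_pos
      obtain ⟨p, hp⟩ : ∃ p, n = p + 1 := ⟨n - 1, by omega⟩
      have hn1' : n - 1 = p := by omega
      have hBp : B = p + 2 := by omega
      rw [hn1', e2]
      nlinarith [e1, e3, hBp]
    omega
  exact absurd (hmin c' hGood') (not_le.mpr hlt)

lemma bstar_le_card {G : SimpleGraph V} [Fintype V] {k : ℕ} {c : V → ℕ}
    (h : IsBStarColoring G k c) : k ≤ Fintype.card V := by
  classical
  obtain ⟨⟨-, -, hsurj⟩, -⟩ := h
  have hm : ∀ m : Fin k, ∃ v, c v = m.val + 1 := by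
    intro m
    exact hsurj (m.val + 1) ⟨by omega, by omega⟩
  choose g hg using hm
  have : Function.Injective g := by
    intro a b hab
    have : a.val + 1 = b.val + 1 := by rw [← hg a, ← hg b, hab]
    exact Fin.ext (by omega)
  simpa using Fintype.card_le_of_injective g this

lemma bstar_bddAbove (G : SimpleGraph V) [Fintype V] :
    BddAbove {k | ∃ c : V → ℕ, IsBStarColoring G k c} :=
  ⟨Fintype.card V, fun _ ⟨_, hc⟩ => bstar_le_card hc⟩

lemma bstar_mem (G : SimpleGraph V) [Fintype V] [Nonempty V] :
    ∃ c : V → ℕ, IsBStarColoring G (bStar G) c := by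
  have h1 : {k | ∃ c : V → ℕ, IsBStarColoring G k c}.Nonempty := by
    obtain ⟨k, c, hc⟩ := exists_bstar_coloring G
    exact ⟨k, c, hc⟩
  exact Nat.sSup_mem h1 (bstar_bddAbove G)

/-- if a finite simple graph `G` is the disjoint union of the (nonempty)
induced subgraphs `G[P⁻¹(i)]`, `i ∈ ι` (every edge of `G` joins vertices in the same
part, each part is nonempty, and there is at least one part), then
`b*(G) = max_i b*(G[P⁻¹(i)])`. -/
theorem bStar_disjoint_union {ι : Type*} [Fintype ι] [Nonempty ι] [DecidableEq ι]
    [Fintype W] (G : SimpleGraph W) (P : W → ι)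
    (hedge : ∀ u v, G.Adj u v → P u = P v)
    (hfib : ∀ i, ∃ w, P w = i) :
    bStar G = Finset.univ.sup fun i => bStar (G.induce {w | P w = i}) := by
  classical
  set f : ι → ℕ := fun i => bStar (G.induce {w | P w = i}) with hf
  have hadj : ∀ (i : ι) (x y : {w | P w = i}),
      (G.induce {w | P w = i}).Adj x y ↔ G.Adj x.val y.val := by
    intro i x y
    simp [SimpleGraph.comap_adj]
  -- existence of b*-colorings on each part with f i colors
  have hpart : ∀ i : ι, ∃ c, IsBStarColoring (G.induce {w | P w = i}) (f i) c := by
    intro i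
    letI : Fintype ↥{w | P w = i} := Fintype.ofFinite _
    haveI : Nonempty ↥{w | P w = i} := ⟨⟨(hfib i).choose, (hfib i).choose_spec⟩⟩
    exact bstar_mem _
  choose d hd using hpart
  apply le_antisymm
  · -- bStar G ≤ sup
    rcases Set.eq_empty_or_nonempty {k | ∃ c : W → ℕ, IsBStarColoring G k c} with hA | hA
    · rw [bStar, hA]
      simp
    · have hmem : bStar G ∈ {k | ∃ c : W → ℕ, IsBStarColoring G k c} :=
        Nat.sSup_mem hA (bstar_bddAbove G)
      obtain ⟨c, hc⟩ := hmem
      set k := bStar G with hk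
      obtain ⟨u, hcu, hniceu⟩ := hc.2
      set i : ι := P u with hi
      set e : ↥{w | P w = i} → ℕ := fun x => c x.val with he
      have hecol : IsBStarColoring (G.induce {w | P w = i}) k e := by
        refine ⟨⟨fun x => hc.1.1 x.val,
          fun x y hxy => hc.1.2.1 x.val y.val ((hadj i x y).mp hxy), ?_⟩,
          ⟨u, rfl⟩, hcu, ?_, ?_⟩
        · -- surjectivity
          intro j hj
          rcases eq_or_ne j k with rfl | hne
          · exact ⟨⟨u, rfl⟩, hcu⟩
          · obtain ⟨w, hw1, hw2⟩ := hniceu.1 j hj (by rw [hcu]; exact hne)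
            exact ⟨⟨w, (hedge u w hw1).symm⟩, hw2⟩
        · -- b-vertex
          intro j hj hne
          obtain ⟨w, hw1, hw2⟩ := hniceu.1 j hj hne
          exact ⟨⟨w, (hedge u w hw1).symm⟩, (hadj i _ _).mpr hw1, hw2⟩
        · -- b-vertex neighbors
          intro j hj hne
          obtain ⟨w, hw1, hw2, hw3⟩ := hniceu.2 j hj hne
          have hwp : P w = i := (hedge u w hw1).symm
          refine ⟨⟨w, hwp⟩, (hadj i _ _).mpr hw1, hw2, ?_⟩
          intro j' hj' hne'
          obtain ⟨x, hx1, hx2⟩ := hw3 j' hj' hne'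
          have hxp : P x = i := (hedge w x hx1).symm.trans hwp
          exact ⟨⟨x, hxp⟩, (hadj i _ _).mpr hx1, hx2⟩
      have h1 : k ≤ f i := by
        letI : Fintype ↥{w | P w = i} := Fintype.ofFinite _
        exact le_csSup (bstar_bddAbove _) ⟨e, hecol⟩
      exact h1.trans (Finset.le_sup (Finset.mem_univ i))
  · -- sup ≤ bStar G
    obtain ⟨i0, -, hi0⟩ := Finset.exists_mem_eq_sup (Finset.univ : Finset ι)
      Finset.univ_nonempty f
    rw [hi0]
    set K := f i0 with hK
    have hd0 : IsBStarColoring (G.induce {w | P w = i0}) K (d i0) := hd i0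
    set c : W → ℕ := fun w => d (P w) ⟨w, rfl⟩ with hc
    have hcd : ∀ (w : W) (i : ι) (h : P w = i), c w = d i ⟨w, h⟩ := by
      intro w i h
      subst h
      rfl
    have hcd2 : ∀ (i : ι) (x : ↥{w | P w = i}), c x.val = d i x := by
      intro i x
      rw [hcd x.val i x.prop]
    have hfK : ∀ i, f i ≤ K := fun i => hi0 ▸ Finset.le_sup (Finset.mem_univ i)
    have hcol : IsBStarColoring G K c := by
      obtain ⟨u0, hu0, hnice0⟩ := hd0.2
      refine ⟨⟨?_, ?_, ?_⟩, u0.val, by rw [hcd2 i0 u0]; exact hu0, ?_, ?_⟩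
      · intro w
        have := (hd (P w)).1.1 ⟨w, rfl⟩
        have h2 := hfK (P w)
        exact ⟨this.1, this.2.trans h2⟩
      · intro a b hab
        have hPab : P a = P b := hedge a b hab
        rw [hcd a (P b) hPab, hcd b (P b) rfl]
        exact (hd (P b)).1.2.1 ⟨a, hPab⟩ ⟨b, rfl⟩ ((hadj (P b) _ _).mpr hab)
      · intro j hj
        obtain ⟨x, hx⟩ := hd0.1.2.2 j hj
        exact ⟨x.val, by rw [hcd2 i0 x]; exact hx⟩
      · -- b-vertex
        intro j hj hne
        rw [hcd2 i0 u0] at hne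
        obtain ⟨x, hx1, hx2⟩ := hnice0.1 j hj hne
        exact ⟨x.val, (hadj i0 _ _).mp hx1, by rw [hcd2 i0 x]; exact hx2⟩
      · -- b-vertex neighbors
        intro j hj hne
        rw [hcd2 i0 u0] at hne
        obtain ⟨x, hx1, hx2, hx3⟩ := hnice0.2 j hj hne
        refine ⟨x.val, (hadj i0 _ _).mp hx1, by rw [hcd2 i0 x]; exact hx2, ?_⟩
        intro j' hj' hne'
        rw [hcd2 i0 x] at hne'
        obtain ⟨y, hy1, hy2⟩ := hx3 j' hj' hne'
        exact ⟨y.val, (hadj i0 _ _).mp hy1, by rw [hcd2 i0 y]; exact hy2⟩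
    exact le_csSup (bstar_bddAbove G) ⟨c, hcol⟩
end

section
/- Let G be a connected block graph and let B be a block of G on t vertices. Then every assignment of the colors 1, …, t bijectively to the vertices of B can be extended to a Grundy coloring of G using k colors for some k ≤ ω(G), whose restriction to B is the given assignment. -/
variable {V : Type*} {W : Type*}

/-- `B` is (the vertex set of) a block of `G`: a maximal set of vertices inducing a
connected subgraph with no cut vertex. -/
def IsBlockSet (G : SimpleGraph V) (B : Set V) : Prop :=
  B.Nonempty ∧ (G.induce B).Connected ∧
  (∀ v ∈ B, (G.induce (B \ {v})).Preconnected) ∧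
  ∀ B' : Set V, B ⊆ B' → (G.induce B').Connected →
    (∀ v ∈ B', (G.induce (B' \ {v})).Preconnected) → B' = B

/-- A block graph: every block is a clique. -/
def IsBlockGraph (G : SimpleGraph V) : Prop :=
  ∀ B : Set V, IsBlockSet G B → G.IsClique B

section BGPEhelpers
open SimpleGraph


private lemma reach_induce_of_walk {V : Type*} {G : SimpleGraph V} {s : Set V} :
    ∀ {a b : V} (p : G.Walk a b), (∀ x ∈ p.support, x ∈ s) →
      ∀ (ha : a ∈ s) (hb : b ∈ s), (G.induce s).Reachable ⟨a, ha⟩ ⟨b, hb⟩ := by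
  intro a b p
  induction p with
  | nil => intro _ ha hb; exact Reachable.refl _
  | @cons a c b h q ih =>
    intro hs ha hb
    have hc : c ∈ s := hs c (by simp [Walk.support_cons])
    have hadj : (G.induce s).Adj ⟨a, ha⟩ ⟨c, hc⟩ := h
    exact hadj.reachable.trans
      (ih (fun x hx => hs x (by simp [Walk.support_cons, hx])) hc hb)

private lemma walk_of_induce_reach {V : Type*} {G : SimpleGraph V} {s : Set V} {a b : ↥s}
    (h : (G.induce s).Reachable a b) :
    ∃ p : G.Walk a.1 b.1, ∀ x ∈ p.support, x ∈ s := by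
  obtain ⟨p⟩ := h
  induction p with
  | nil =>
    exact ⟨Walk.nil, fun x hx => by
      rw [Walk.support_nil, List.mem_singleton] at hx; exact hx ▸ Subtype.coe_prop _⟩
  | @cons a c b h q ih =>
    obtain ⟨p', hp'⟩ := ih
    have h' : G.Adj a.1 c.1 := h
    refine ⟨Walk.cons h' p', fun x hx => ?_⟩
    rw [Walk.support_cons, List.mem_cons] at hx
    rcases hx with rfl | hx
    · exact a.2
    · exact hp' x hx

private lemma walk_avoid {V : Type*} [DecidableEq V] {G : SimpleGraph V} {u w : V} (p : G.Walk u w)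
    (hp : p.IsPath) {x y : V} (hx : x ∈ p.support) (hy : y ∈ p.support) (hxy : x ≠ y) :
    ∃ (e : V) (q : G.Walk x e), (e = u ∨ e = w) ∧ (∀ z ∈ q.support, z ∈ p.support) ∧
      y ∉ q.support := by
  by_cases hxt : x ∈ (p.takeUntil y hy).support
  · have hq1p : (p.takeUntil y hy).IsPath := hp.takeUntil hy
    refine ⟨u, ((p.takeUntil y hy).takeUntil x hxt).reverse, Or.inl rfl, ?_, ?_⟩
    · intro z hz
      rw [Walk.support_reverse, List.mem_reverse] at hz
      exact p.support_takeUntil_subset hy ((p.takeUntil y hy).support_takeUntil_subset hxt hz)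
    · rw [Walk.support_reverse, List.mem_reverse]
      intro hyq
      have hnd : (p.takeUntil y hy).support.Nodup := hq1p.support_nodup
      rw [← (p.takeUntil y hy).take_spec hxt, Walk.support_append] at hnd
      have hy2 : y ∈ ((p.takeUntil y hy).dropUntil x hxt).support.tail := by
        have h1 : y ∈ ((p.takeUntil y hy).dropUntil x hxt).support := Walk.end_mem_support _
        rw [Walk.support_eq_cons] at h1
        rcases List.mem_cons.mp h1 with h2 | h2
        · exact absurd h2.symm hxy
        · exact h2
      exact (List.disjoint_of_nodup_append hnd) hyq hy2
  · have hxd : x ∈ (p.dropUntil y hy).support := by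
      have h0 := hx
      rw [← p.take_spec hy, Walk.mem_support_append_iff] at h0
      tauto
    have hq2p : (p.dropUntil y hy).IsPath := hp.dropUntil hy
    refine ⟨w, (p.dropUntil y hy).dropUntil x hxd, Or.inr rfl, ?_, ?_⟩
    · intro z hz
      exact p.support_dropUntil_subset hy ((p.dropUntil y hy).support_dropUntil_subset hxd hz)
    · intro hyq
      have hnd : (p.dropUntil y hy).support.Nodup := hq2p.support_nodup
      rw [← (p.dropUntil y hy).take_spec hxd, Walk.support_append] at hnd
      have hy1 : y ∈ ((p.dropUntil y hy).takeUntil x hxd).support := Walk.start_mem_support _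
      have hy2 : y ∈ ((p.dropUntil y hy).dropUntil x hxd).support.tail := by
        rw [Walk.support_eq_cons] at hyq
        rcases List.mem_cons.mp hyq with h2 | h2
        · exact absurd h2.symm hxy
        · exact h2
      exact (List.disjoint_of_nodup_append hnd) hy1 hy2

private def GoodSet {V : Type*} (G : SimpleGraph V) (s : Set V) : Prop :=
  s.Nonempty ∧ (G.induce s).Connected ∧ ∀ v ∈ s, (G.induce (s \ {v})).Preconnected

private lemma exists_block_superset {V : Type*} [Fintype V] {G : SimpleGraph V} {s : Set V}
    (hs : GoodSet G s) : ∃ T, s ⊆ T ∧ IsBlockSet G T := by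
  classical
  obtain ⟨T, hTF, hmax⟩ := Set.Finite.exists_maximalFor Set.ncard
    {T | s ⊆ T ∧ GoodSet G T} (Set.toFinite _) ⟨s, subset_rfl, hs⟩
  obtain ⟨hsT, hTne, hTconn, hTcut⟩ := hTF
  refine ⟨T, hsT, hTne, hTconn, hTcut, ?_⟩
  intro B' hsub hconn hcut
  have hB'ne : B'.Nonempty := Set.nonempty_coe_sort.mp hconn.nonempty
  have hB'F : B' ∈ {T | s ⊆ T ∧ GoodSet G T} := ⟨hsT.trans hsub, hB'ne, hconn, hcut⟩
  have h1 : T.ncard ≤ B'.ncard := Set.ncard_le_ncard hsub (Set.toFinite _)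
  have h2 := hmax hB'F h1
  exact (Set.eq_of_subset_of_ncard_le hsub h2.ge (Set.toFinite _)).symm

private lemma adj_of_walk_avoid {V : Type*} [Fintype V] {G : SimpleGraph V}
    (hbg : IsBlockGraph G) {u v w : V} (hvu : G.Adj v u) (hvw : G.Adj v w) (huw : u ≠ w)
    (p0 : G.Walk u w) (hv0 : v ∉ p0.support) : G.Adj u w := by
  classical
  have hpath : (p0.toPath : G.Walk u w).IsPath := p0.toPath.2
  set p : G.Walk u w := (p0.toPath : G.Walk u w) with hpdef
  have hpsub : ∀ z ∈ p.support, z ∈ p0.support := fun z hz => p0.support_toPath_subset hz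
  have hv : v ∉ p.support := fun h => hv0 (hpsub v h)
  set s : Set V := insert v {x | x ∈ p.support} with hsdef
  have hsub_s : ∀ z ∈ p.support, z ∈ s := fun z hz => Set.mem_insert_iff.mpr (Or.inr hz)
  have hvs : v ∈ s := Set.mem_insert v _
  have hus : u ∈ s := hsub_s u p.start_mem_support
  have hws : w ∈ s := hsub_s w p.end_mem_support
  have hreachv : ∀ x (hx : x ∈ s), (G.induce s).Reachable ⟨x, hx⟩ ⟨v, hvs⟩ := by
    intro x hx
    rcases Set.mem_insert_iff.mp hx with rfl | hxp
    · exact Reachable.refl _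
    · have hxp' : x ∈ p.support := hxp
      refine reach_induce_of_walk ((p.takeUntil x hxp').reverse.append hvu.symm.toWalk) ?_ hx hvs
      intro z hz
      rw [Walk.mem_support_append_iff] at hz
      rcases hz with hz | hz
      · rw [Walk.support_reverse, List.mem_reverse] at hz
        exact hsub_s z (p.support_takeUntil_subset hxp' hz)
      · have hz' : z = u ∨ z = v := by simpa [Adj.toWalk] using hz
        rcases hz' with rfl | rfl
        exacts [hus, hvs]
  have hgood : GoodSet G s := by
    refine ⟨⟨v, hvs⟩, ?_, ?_⟩
    · rw [connected_iff]
      exact ⟨fun a b => (hreachv a.1 a.2).trans (hreachv b.1 b.2).symm, ⟨⟨v, hvs⟩⟩⟩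
    · intro y hy
      by_cases hyv : y = v
      · subst hyv
        have hu' : u ∈ s \ {y} :=
          ⟨hus, fun h => hvu.ne (Set.mem_singleton_iff.mp h).symm⟩
        have hclaim : ∀ x (hx : x ∈ s \ {y}),
            (G.induce (s \ {y})).Reachable ⟨x, hx⟩ ⟨u, hu'⟩ := by
          intro x hx
          obtain ⟨hxs, hxv⟩ := hx
          have hxp : x ∈ p.support := by
            rcases Set.mem_insert_iff.mp hxs with rfl | h
            · exact absurd (Set.mem_singleton_iff.mpr rfl) hxv
            · exact h
          refine reach_induce_of_walk (p.takeUntil x hxp).reverse ?_ _ hu'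
          intro z hz
          rw [Walk.support_reverse, List.mem_reverse] at hz
          have hzp := p.support_takeUntil_subset hxp hz
          exact ⟨hsub_s z hzp, fun hzv => hv ((Set.mem_singleton_iff.mp hzv) ▸ hzp)⟩
        exact fun a b => (hclaim a.1 a.2).trans (hclaim b.1 b.2).symm
      · have hyp : y ∈ p.support := by
          rcases Set.mem_insert_iff.mp hy with rfl | h
          · exact absurd rfl hyv
          · exact h
        have hv' : v ∈ s \ {y} :=
          ⟨hvs, fun h => hyv (Set.mem_singleton_iff.mp h).symm⟩
        have hclaim : ∀ x (hx : x ∈ s \ {y}),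
            (G.induce (s \ {y})).Reachable ⟨x, hx⟩ ⟨v, hv'⟩ := by
          intro x hx
          obtain ⟨hxs, hxy⟩ := hx
          rcases Set.mem_insert_iff.mp hxs with rfl | hxp
          · exact Reachable.refl _
          · have hxy' : x ≠ y := fun h => hxy (Set.mem_singleton_iff.mpr h)
            obtain ⟨e, q, he, hqsub, hyq⟩ := walk_avoid p hpath hxp hyp hxy'
            have hev : G.Adj e v := by rcases he with rfl | rfl; exacts [hvu.symm, hvw.symm]
            have hx' : x ∈ s \ {y} := ⟨hsub_s x hxp, hxy⟩
            refine reach_induce_of_walk (q.append hev.toWalk) ?_ hx' hv'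
            intro z hz
            rw [Walk.mem_support_append_iff] at hz
            rcases hz with hz | hz
            · exact ⟨hsub_s z (hqsub z hz), fun h => hyq ((Set.mem_singleton_iff.mp h) ▸ hz)⟩
            · have hz' : z = e ∨ z = v := by simpa [Adj.toWalk] using hz
              rcases hz' with rfl | rfl
              · exact ⟨hsub_s z (hqsub z q.end_mem_support),
                  fun h => hyq ((Set.mem_singleton_iff.mp h) ▸ q.end_mem_support)⟩
              · exact hv'
        exact fun a b => (hclaim a.1 a.2).trans (hclaim b.1 b.2).symm
  obtain ⟨T, hsT, hT⟩ := exists_block_superset hgood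
  exact hbg T hT (hsT hus) (hsT hws) huw


private noncomputable def distB {V : Type*} (G : SimpleGraph V) (B : Set V) (u : V) : ℕ :=
  sInf {n | ∃ b ∈ B, ∃ p : G.Walk u b, p.length = n}

private lemma distB_set_nonempty {V : Type*} {G : SimpleGraph V} {B : Set V}
    (hconn : G.Connected) (hBne : B.Nonempty) (u : V) :
    {n | ∃ b ∈ B, ∃ p : G.Walk u b, p.length = n}.Nonempty := by
  obtain ⟨b₀, hb₀⟩ := hBne
  obtain ⟨p⟩ := hconn.preconnected u b₀
  exact ⟨p.length, b₀, hb₀, p, rfl⟩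

private lemma distB_eq_zero_iff {V : Type*} {G : SimpleGraph V} {B : Set V}
    (hconn : G.Connected) (hBne : B.Nonempty) (u : V) :
    distB G B u = 0 ↔ u ∈ B := by
  constructor
  · intro h
    rcases Nat.sInf_eq_zero.mp h with h0 | h0
    · obtain ⟨b, hb, p, hp⟩ := h0
      exact (Walk.eq_of_length_eq_zero hp) ▸ hb
    · exact absurd h0 (Set.nonempty_iff_ne_empty.mp (distB_set_nonempty hconn hBne u))
  · intro h
    exact Nat.le_zero.mp (Nat.sInf_le ⟨u, h, Walk.nil, rfl⟩)

private lemma exists_walk_to_B {V : Type*} {G : SimpleGraph V} {B : Set V}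
    (hconn : G.Connected) (hBne : B.Nonempty) (u : V) :
    ∃ b ∈ B, ∃ p : G.Walk u b,
      ∀ x ∈ p.support, x = u ∨ distB G B x < distB G B u := by
  suffices H : ∀ n u, distB G B u = n → ∃ b ∈ B, ∃ p : G.Walk u b,
      ∀ x ∈ p.support, x = u ∨ distB G B x < distB G B u from H _ u rfl
  intro n
  induction n using Nat.strong_induction_on with
  | _ n ih =>
    intro u hn
    by_cases hu : u ∈ B
    · exact ⟨u, hu, Walk.nil, by simp⟩
    · have hmem := Nat.sInf_mem (distB_set_nonempty hconn hBne u)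
      obtain ⟨b, hb, p, hp⟩ := hmem
      cases p with
      | nil => exact absurd hb hu
      | @cons _ c _ h q =>
        have hlen : q.length + 1 = distB G B u := by
          simpa [Walk.length_cons, distB] using hp
        have hlt : distB G B c < distB G B u := by
          have h1 : distB G B c ≤ q.length := Nat.sInf_le ⟨b, hb, q, rfl⟩
          omega
        obtain ⟨b', hb', r, hr⟩ := ih (distB G B c) (hn ▸ hlt) c rfl
        refine ⟨b', hb', Walk.cons h r, ?_⟩
        intro x hx
        rw [Walk.support_cons, List.mem_cons] at hx
        rcases hx with rfl | hx
        · exact Or.inl rfl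
        · rcases hr x hx with rfl | hlt2
          · exact Or.inr hlt
          · exact Or.inr (lt_trans hlt2 hlt)

private lemma adj_of_le_distB {V : Type*} [Fintype V] {G : SimpleGraph V}
    (hconn : G.Connected) (hbg : IsBlockGraph G) {B : Set V} (hB : IsBlockSet G B)
    {u v w : V} (hvB : v ∉ B) (hvu : G.Adj v u) (hvw : G.Adj v w) (huw : u ≠ w)
    (hu : distB G B u ≤ distB G B v) (hw : distB G B w ≤ distB G B v) : G.Adj u w := by
  obtain ⟨b1, hb1, pu, hpu⟩ := exists_walk_to_B hconn hB.1 u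
  obtain ⟨b2, hb2, pw, hpw⟩ := exists_walk_to_B hconn hB.1 w
  obtain ⟨q, hq⟩ := walk_of_induce_reach (hB.2.1.preconnected ⟨b1, hb1⟩ ⟨b2, hb2⟩)
  have hvtot : v ∉ (pu.append (q.append pw.reverse)).support := by
    intro hvt
    rw [Walk.mem_support_append_iff, Walk.mem_support_append_iff,
      Walk.support_reverse, List.mem_reverse] at hvt
    rcases hvt with h | h | h
    · rcases hpu v h with rfl | hlt
      · exact hvu.ne rfl
      · omega
    · exact hvB (hq v h)
    · rcases hpw v h with rfl | hlt
      · exact hvw.ne rfl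
      · omega
  exact adj_of_walk_avoid hbg hvu hvw huw _ hvtot


open Classical in
private noncomputable def greedyCol {V : Type*} (G : SimpleGraph V) (B : Set V) (c₀ : V → ℕ)
    (rank : V → ℕ) (v : V) : ℕ :=
  if v ∈ B then c₀ v
  else sInf {j | 1 ≤ j ∧ ∀ u, G.Adj v u → rank u < rank v → greedyCol G B c₀ rank u ≠ j}
termination_by rank v
decreasing_by assumption

private lemma greedyCol_mem {V : Type*} {G : SimpleGraph V} {B : Set V} {c₀ rank : V → ℕ}
    {v : V} (hv : v ∈ B) : greedyCol G B c₀ rank v = c₀ v := by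
  rw [greedyCol, if_pos hv]

private lemma greedyCol_not_mem {V : Type*} {G : SimpleGraph V} {B : Set V} {c₀ rank : V → ℕ}
    {v : V} (hv : v ∉ B) : greedyCol G B c₀ rank v =
      sInf {j | 1 ≤ j ∧ ∀ u, G.Adj v u → rank u < rank v → greedyCol G B c₀ rank u ≠ j} := by
  rw [greedyCol]; rw [if_neg hv]

private lemma greedySet_nonempty {V : Type*} [Fintype V] {G : SimpleGraph V} {B : Set V}
    {c₀ rank : V → ℕ} (v : V) :
    {j | 1 ≤ j ∧ ∀ u, G.Adj v u → rank u < rank v → greedyCol G B c₀ rank u ≠ j}.Nonempty := by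
  refine ⟨Finset.univ.sup (greedyCol G B c₀ rank) + 1, by omega, fun u _ _ => ?_⟩
  have := Finset.le_sup (f := greedyCol G B c₀ rank) (Finset.mem_univ u)
  omega

private lemma greedyCol_spec {V : Type*} [Fintype V] {G : SimpleGraph V} {B : Set V}
    {c₀ rank : V → ℕ} {v : V} (hv : v ∉ B) :
    1 ≤ greedyCol G B c₀ rank v ∧ ∀ u, G.Adj v u → rank u < rank v →
      greedyCol G B c₀ rank u ≠ greedyCol G B c₀ rank v := by
  rw [greedyCol_not_mem hv]
  exact Nat.sInf_mem (greedySet_nonempty v)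

private lemma greedyCol_pos {V : Type*} [Fintype V] {G : SimpleGraph V} {B : Set V}
    {c₀ rank : V → ℕ} (hpos : ∀ b ∈ B, 1 ≤ c₀ b) (v : V) : 1 ≤ greedyCol G B c₀ rank v := by
  by_cases hv : v ∈ B
  · rw [greedyCol_mem hv]; exact hpos v hv
  · exact (greedyCol_spec hv).1

private lemma greedyCol_lt {V : Type*} [Fintype V] {G : SimpleGraph V} {B : Set V}
    {c₀ rank : V → ℕ} {v : V} (hv : v ∉ B) {i : ℕ} (h1 : 1 ≤ i)
    (hi : i < greedyCol G B c₀ rank v) :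
    ∃ u, G.Adj v u ∧ rank u < rank v ∧ greedyCol G B c₀ rank u = i := by
  rw [greedyCol_not_mem hv] at hi
  have hni := Nat.notMem_of_lt_sInf hi
  simp only [Set.mem_setOf_eq, not_and, not_forall, not_not] at hni
  obtain ⟨u, hadj, hrk, hcu⟩ := hni h1
  exact ⟨u, hadj, hrk, hcu⟩

end BGPEhelpers

/-- in a connected block graph `G`, any bijective assignment of the colors
`{1,…,t}` to the vertices of a block `B` extends to a Grundy coloring of `G` using
`k ≤ ω(G)` colors. -/
theorem blockGraph_precoloring_extension [Fintype V] (G : SimpleGraph V)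
    (hconn : G.Connected) (hbg : IsBlockGraph G)
    (B : Set V) (hB : IsBlockSet G B) (t : ℕ) (c₀ : V → ℕ)
    (hc₀ : Set.BijOn c₀ B (Set.Icc 1 t)) :
    ∃ k ≤ omegaNum G, ∃ c : V → ℕ,
      IsGrundyColoring G k c ∧ ∀ v ∈ B, c v = c₀ v := by
  classical
  obtain ⟨b₀, hb₀⟩ := hB.1
  haveI : Nonempty V := ⟨b₀⟩
  have hBclique : G.IsClique B := hbg B hB
  have ht1 : 1 ≤ t := by have := hc₀.1 hb₀; rw [Set.mem_Icc] at this; omega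
  have homega : ∀ s : Finset V, G.IsClique (↑s : Set V) → s.card ≤ omegaNum G := by
    intro s hs
    have hbdd : BddAbove {n | ∃ s : Finset V, G.IsNClique n s} := by
      refine ⟨Fintype.card V, ?_⟩
      rintro n ⟨s, hsn⟩
      exact hsn.card_eq ▸ Finset.card_le_univ s
    exact le_csSup hbdd ⟨s, hs, rfl⟩
  have hncard : B.ncard = t := by
    have h1 : (c₀ '' B).ncard = B.ncard := Set.ncard_image_of_injOn hc₀.injOn
    rw [hc₀.image_eq, ← Finset.coe_Icc, Set.ncard_coe_finset, Nat.card_Icc] at h1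
    omega
  have htω : t ≤ omegaNum G := by
    have h2 := homega B.toFinset (by rw [Set.coe_toFinset]; exact hBclique)
    rwa [← Set.ncard_eq_toFinset_card' B, hncard] at h2
  set d : V → ℕ := distB G B with hd
  have hd0 : ∀ u, d u = 0 ↔ u ∈ B := fun u => distB_eq_zero_iff hconn hB.1 u
  set N := Fintype.card V with hN
  set rank : V → ℕ := fun x => d x * N + ((Fintype.equivFin V) x : ℕ) with hrankdef
  have hrank_lt : ∀ {x y : V}, d x < d y → rank x < rank y := by
    intro x y hxy
    have h1 : ((Fintype.equivFin V) x : ℕ) < N := (Fintype.equivFin V x).isLt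
    have h2 : (d x + 1) * N ≤ d y * N := Nat.mul_le_mul_right _ hxy
    rw [add_mul, one_mul] at h2
    simp only [hrankdef]
    omega
  have hrank_mono : ∀ {x y : V}, rank x < rank y → d x ≤ d y := by
    intro x y h
    by_contra hc
    push_neg at hc
    have := hrank_lt hc
    omega
  have hrank_inj : Function.Injective rank := by
    intro x y hxy
    have hdeq : d x = d y := by
      rcases lt_trichotomy (d x) (d y) with h | h | h
      · exact absurd (hrank_lt h) (by omega)
      · exact h
      · exact absurd (hrank_lt h) (by omega)
    have hval : ((Fintype.equivFin V) x : ℕ) = ((Fintype.equivFin V) y : ℕ) := by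
      simp only [hrankdef, hdeq] at hxy
      omega
    exact (Fintype.equivFin V).injective (Fin.val_injective hval)
  have hrank_B : ∀ {b x : V}, b ∈ B → x ∉ B → rank b < rank x := by
    intro b x hb hx
    refine hrank_lt ?_
    rw [(hd0 b).mpr hb]
    exact Nat.pos_of_ne_zero (fun h => hx ((hd0 x).mp h))
  have colB : ∀ v ∈ B, greedyCol G B c₀ rank v = c₀ v := fun v hv => greedyCol_mem hv
  have hpos : ∀ v, 1 ≤ greedyCol G B c₀ rank v :=
    greedyCol_pos (fun b hb => (hc₀.mapsTo hb).1)
  have hnbB : ∀ v ∈ B, ∀ i, 1 ≤ i → i < greedyCol G B c₀ rank v →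
      ∃ u, G.Adj v u ∧ greedyCol G B c₀ rank u = i := by
    intro v hv i h1 hi
    rw [colB v hv] at hi
    have hvt : c₀ v ≤ t := (hc₀.mapsTo hv).2
    obtain ⟨b, hbB, hbi⟩ := hc₀.surjOn (Set.mem_Icc.mpr ⟨h1, by omega⟩)
    have hne : v ≠ b := fun h => by rw [← h] at hbi; omega
    exact ⟨b, hBclique hv hbB hne, (colB b hbB).trans hbi⟩
  have hnb : ∀ v i, 1 ≤ i → i < greedyCol G B c₀ rank v →
      ∃ u, G.Adj v u ∧ greedyCol G B c₀ rank u = i := by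
    intro v i h1 hi
    by_cases hv : v ∈ B
    · exact hnbB v hv i h1 hi
    · obtain ⟨u, h2, _, h4⟩ := greedyCol_lt hv h1 hi
      exact ⟨u, h2, h4⟩
  have hcolω : ∀ v, greedyCol G B c₀ rank v ≤ omegaNum G := by
    intro v
    by_cases hv : v ∈ B
    · rw [colB v hv]; exact le_trans (hc₀.mapsTo hv).2 htω
    · set j := greedyCol G B c₀ rank v with hj
      rcases Nat.lt_or_ge j 2 with hj2 | hj2
      · omega
      · have hchoice : ∀ i : ℕ, ∃ u : V, 1 ≤ i → i ≤ j - 1 →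
            (G.Adj v u ∧ rank u < rank v ∧ greedyCol G B c₀ rank u = i) := by
          intro i
          by_cases hi : 1 ≤ i ∧ i ≤ j - 1
          · obtain ⟨u, h⟩ := greedyCol_lt hv hi.1 (show i < j by omega)
            exact ⟨u, fun _ _ => h⟩
          · exact ⟨v, fun h1 h2 => absurd ⟨h1, h2⟩ hi⟩
        choose f hf using hchoice
        have hUcard : ((Finset.Icc 1 (j - 1)).image f).card = j - 1 := by
          rw [Finset.card_image_of_injOn, Nat.card_Icc]
          · omega
          · intro a ha b hb hab
            rw [Finset.mem_coe, Finset.mem_Icc] at ha hb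
            have h1 := (hf a ha.1 ha.2).2.2
            have h2 := (hf b hb.1 hb.2).2.2
            rw [← h1, ← h2, hab]
        have hvU : v ∉ (Finset.Icc 1 (j - 1)).image f := by
          intro hvU
          rw [Finset.mem_image] at hvU
          obtain ⟨i, hi, hfi⟩ := hvU
          rw [Finset.mem_Icc] at hi
          have := (hf i hi.1 hi.2).1
          rw [hfi] at this
          exact G.irrefl this
        have hclq : G.IsClique (↑(insert v ((Finset.Icc 1 (j - 1)).image f)) : Set V) := by
          intro x hx y hy hxy
          simp only [Finset.coe_insert, Set.mem_insert_iff, Finset.mem_coe,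
            Finset.mem_image] at hx hy
          rcases hx with rfl | hx
          · rcases hy with rfl | hy
            · exact absurd rfl hxy
            · obtain ⟨i, hi, rfl⟩ := hy
              rw [Finset.mem_Icc] at hi
              exact (hf i hi.1 hi.2).1
          · obtain ⟨i, hi, rfl⟩ := hx
            rw [Finset.mem_Icc] at hi
            rcases hy with rfl | hy
            · exact ((hf i hi.1 hi.2).1).symm
            · obtain ⟨l, hl, rfl⟩ := hy
              rw [Finset.mem_Icc] at hl
              have h1 := hf i hi.1 hi.2
              have h2 := hf l hl.1 hl.2
              exact adj_of_le_distB hconn hbg hB hv h1.1 h2.1 hxy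
                (hrank_mono h1.2.1) (hrank_mono h2.2.1)
        have hfin := homega _ hclq
        rw [Finset.card_insert_of_notMem hvU, hUcard] at hfin
        omega
  set k := Finset.univ.sup (greedyCol G B c₀ rank) with hk
  have hk_le : ∀ v, greedyCol G B c₀ rank v ≤ k :=
    fun v => Finset.le_sup (Finset.mem_univ v)
  have hkω : k ≤ omegaNum G := Finset.sup_le (fun v _ => hcolω v)
  obtain ⟨vtop, -, hvtop⟩ := Finset.exists_mem_eq_sup Finset.univ Finset.univ_nonempty
    (greedyCol G B c₀ rank)
  have hk1 : 1 ≤ k := le_trans (hpos b₀) (hk_le b₀)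
  refine ⟨k, hkω, greedyCol G B c₀ rank, ⟨⟨?_, ?_, ?_⟩, ?_⟩, colB⟩
  · exact fun v => Set.mem_Icc.mpr ⟨hpos v, hk_le v⟩
  · have hproper : ∀ u v, G.Adj u v → rank u < rank v →
        greedyCol G B c₀ rank u ≠ greedyCol G B c₀ rank v := by
      intro u v hadj hr
      by_cases hv : v ∈ B
      · have hu : u ∈ B := by
          by_contra hu
          exact absurd (hrank_B hv hu) (by omega)
        rw [colB u hu, colB v hv]
        exact fun h => hadj.ne (hc₀.injOn hu hv h)
      · exact (greedyCol_spec hv).2 u hadj.symm hr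
    intro u v hadj
    rcases lt_trichotomy (rank u) (rank v) with h | h | h
    · exact hproper u v hadj h
    · exact absurd (hrank_inj h) hadj.ne
    · exact fun heq => hproper v u hadj.symm h heq.symm
  · intro j hj
    rw [Set.mem_Icc] at hj
    rcases eq_or_lt_of_le hj.2 with heq | hlt
    · exact ⟨vtop, hvtop.symm.trans heq.symm⟩
    · obtain ⟨u, _, hu⟩ := hnb vtop j hj.1 (hvtop ▸ hlt)
      exact ⟨u, hu⟩
  · intro i jj h1 hij hjk v hv
    rw [← hv] at hij
    exact hnb v i h1 hij
end

section
/- Every block graph G is b*-monotonic: for every induced subgraph H_1 of G and every induced subgraph H_2 of H_1 (both with at least one vertex), b*(H_2) ≤ b*(H_1). -/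
variable {V : Type*} {W : Type*}

set_option maxHeartbeats 1000000

namespace BStarAux

open SimpleGraph Walk

def CliqueCycles (H : SimpleGraph W) : Prop :=
  ∀ ⦃a : W⦄ (w : H.Walk a a), w.IsCycle → H.IsClique {x | x ∈ w.support}

lemma reach_induce_of_walk {H : SimpleGraph W} {a b : W} (p : H.Walk a b) (T : Set W)
    (hT : ∀ x ∈ p.support, x ∈ T) {c d : W} (hc : c ∈ p.support) (hd : d ∈ p.support) :
    (H.induce T).Reachable ⟨c, hT c hc⟩ ⟨d, hT d hd⟩ := by
  have hcon := p.toSubgraph_connected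
  have hvs : p.toSubgraph.verts ⊆ {w | w ∈ p.support} := le_of_eq p.verts_toSubgraph
  let f : p.toSubgraph.coe →g H.induce T :=
    { toFun := fun x => ⟨x.1, hT x.1 (hvs x.2)⟩
      map_rel' := fun {x y} hxy => hxy.adj_sub }
  have hc' : c ∈ p.toSubgraph.verts := by rw [Walk.verts_toSubgraph]; exact hc
  have hd' : d ∈ p.toSubgraph.verts := by rw [Walk.verts_toSubgraph]; exact hd
  exact (hcon.preconnected ⟨c, hc'⟩ ⟨d, hd'⟩).map f

lemma end_mem_tail {H : SimpleGraph W} {a : W} {c : H.Walk a a} (h : ¬c.Nil) :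
    a ∈ c.support.tail := by
  cases c with
  | nil => simp at h
  | cons h q => simpa using q.end_mem_support

lemma cliqueCycles_of_isBlockGraph [Finite V] (G : SimpleGraph V) (hbg : IsBlockGraph G) :
    CliqueCycles G := by
  classical
  intro a w hw
  have hconn : (G.induce {x | x ∈ w.support}).Connected :=
    { preconnected := fun ⟨c, hc⟩ ⟨d, hd⟩ => reach_induce_of_walk w _ (fun x hx => hx) hc hd
      nonempty := ⟨⟨a, w.start_mem_support⟩⟩ }
  have hdel : ∀ v ∈ {x | x ∈ w.support},
      (G.induce ({x | x ∈ w.support} \ {v})).Preconnected := by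
    intro v hv
    have hw' : (w.rotate v hv).IsCycle := hw.rotate hv
    have hperm := (w.support_rotate v hv).perm
    have hvtail : v ∈ w.support.tail := by
      rcases w.mem_support_iff.mp hv with rfl | h
      · exact end_mem_tail hw.not_nil
      · exact h
    have hatail : a ∈ w.support.tail := end_mem_tail hw.not_nil
    have hsupp : ∀ x, x ∈ (w.rotate v hv).support ↔ x ∈ w.support := by
      intro x
      rw [(w.rotate v hv).mem_support_iff, w.mem_support_iff, hperm.mem_iff]
      constructor
      · rintro (rfl | hx)
        · exact Or.inr hvtail
        · exact Or.inr hx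
      · rintro (rfl | hx)
        · exact Or.inr hatail
        · exact Or.inr hx
    obtain ⟨b, h, q, hw'eq⟩ : ∃ (b : V) (h : G.Adj v b) (q : G.Walk b v),
        w.rotate v hv = Walk.cons h q := by
      cases hq : w.rotate v hv with
      | nil => rw [hq] at hw'; exact absurd hw' Walk.IsCycle.not_of_nil
      | cons h q => exact ⟨_, h, q, rfl⟩
    rw [hw'eq] at hw'
    simp only [hw'eq] at hsupp
    obtain ⟨x, r, h', hrconcat⟩ := Walk.exists_cons_eq_concat h q
    have hnodupq : q.support.Nodup := by simpa using hw'.support_nodup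
    have hqsupp : q.support = r.support.tail ++ [v] := by
      have h1 : v :: q.support = (v :: r.support.tail) ++ [v] := by
        rw [← Walk.support_eq_cons r]
        calc v :: q.support = (Walk.cons h q).support := by simp
        _ = (r.concat h').support := by rw [hrconcat]
        _ = r.support ++ [v] := by rw [Walk.support_concat]
      exact (List.cons.inj h1).2
    have hvnotin : v ∉ r.support.tail := by
      intro hvmem
      rw [hqsupp] at hnodupq
      exact (List.disjoint_of_nodup_append hnodupq) hvmem (by simp)
    obtain ⟨c0, h0, r0, hreq⟩ : ∃ (c0 : V) (h0 : G.Adj v c0) (r0 : G.Walk c0 x),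
        r = Walk.cons h0 r0 := by
      cases r with
      | nil => exact absurd h' (G.loopless.irrefl v)
      | cons h0 r0 => exact ⟨_, h0, r0, rfl⟩
    have hr0 : r.support.tail = r0.support := by rw [hreq]; simp
    have hset : ∀ y, y ∈ ({x | x ∈ w.support} \ {v} : Set V) ↔ y ∈ r0.support := by
      intro y
      rw [← hr0]
      constructor
      · rintro ⟨hy1, hy2⟩
        have hy2' : y ≠ v := hy2
        have : y ∈ (Walk.cons h q).support := (hsupp y).mpr hy1
        rw [Walk.support_cons] at this
        rcases List.mem_cons.mp this with rfl | hmem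
        · exact absurd rfl hy2'
        · rw [hqsupp] at hmem
          rcases List.mem_append.mp hmem with hmem' | hmem'
          · exact hmem'
          · exact absurd (List.mem_singleton.mp hmem') hy2'
      · intro hy
        refine ⟨(hsupp y).mp ?_, fun hyv => hvnotin ((Set.mem_singleton_iff.mp hyv) ▸ hy)⟩
        rw [Walk.support_cons]
        exact List.mem_cons_of_mem _ (by rw [hqsupp]; exact List.mem_append_left _ hy)
    intro ⟨c, hc⟩ ⟨d, hd⟩
    exact reach_induce_of_walk r0 _ (fun z hz => (hset z).mpr hz) ((hset c).mp hc) ((hset d).mp hd)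
  have hSFam : {x | x ∈ w.support} ∈ {B : Set V | {x | x ∈ w.support} ⊆ B ∧ B.Nonempty ∧
      (G.induce B).Connected ∧ ∀ v ∈ B, (G.induce (B \ {v})).Preconnected} :=
    ⟨subset_rfl, ⟨a, w.start_mem_support⟩, hconn, hdel⟩
  obtain ⟨B, hB, hmax⟩ := Set.Finite.exists_maximalFor Set.ncard _ (Set.toFinite _) ⟨_, hSFam⟩
  have hblock : IsBlockSet G B := by
    refine ⟨hB.2.1, hB.2.2.1, hB.2.2.2, ?_⟩
    intro B' hBB' hconn' hdel'
    have hB'Fam : B' ∈ {B : Set V | {x | x ∈ w.support} ⊆ B ∧ B.Nonempty ∧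
        (G.induce B).Connected ∧ ∀ v ∈ B, (G.induce (B \ {v})).Preconnected} :=
      ⟨hB.1.trans hBB', hB.2.1.mono hBB', hconn', hdel'⟩
    have h1 : B.ncard ≤ B'.ncard := Set.ncard_le_ncard hBB' (Set.toFinite _)
    have h2 := hmax hB'Fam h1
    exact (Set.eq_of_subset_of_ncard_le hBB' h2.ge (Set.toFinite _)).symm
  exact (hbg B hblock).subset hB.1

lemma CliqueCycles.induce {G : SimpleGraph V} (h : CliqueCycles G) (s : Set V) :
    CliqueCycles (G.induce s) := by
  intro a w hw
  let f : G.induce s →g G := ⟨Subtype.val, fun {x y} hxy => hxy⟩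
  have hinj : Function.Injective f := Subtype.val_injective
  have hcl := h (w.map f) (hw.map hinj)
  intro x hx y hy hxy
  have hx' : (x : V) ∈ (w.map f).support := by
    rw [Walk.support_map]; exact List.mem_map_of_mem (f := f) hx
  have hy' : (y : V) ∈ (w.map f).support := by
    rw [Walk.support_map]; exact List.mem_map_of_mem (f := f) hy
  exact hcl hx' hy' (fun hc => hxy (Subtype.val_injective hc))



lemma adj_of_c4 {H : SimpleGraph W} (hc : CliqueCycles H) {a b c d : W}
    (hab : H.Adj a b) (hbc : H.Adj b c) (hcd : H.Adj c d) (hda : H.Adj d a)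
    (hac : a ≠ c) (hbd : b ≠ d) : H.Adj a c := by
  let C : H.Walk a a := .cons hab (.cons hbc (.cons hcd (.cons hda .nil)))
  have n1 : a ≠ b := hab.ne
  have n2 : b ≠ c := hbc.ne
  have n3 : c ≠ d := hcd.ne
  have n4 : d ≠ a := hda.ne
  have hcyc : C.IsCycle := by
    rw [Walk.cons_isCycle_iff]
    constructor
    · rw [Walk.isPath_def]
      simp [n1, n2, n3, n4, hac, hbd, n1.symm, n2.symm, n3.symm, n4.symm, hac.symm, hbd.symm]
    · simp [Sym2.eq_iff, n1, n2, n3, n4, hac, hbd, n1.symm, n2.symm, n3.symm, n4.symm,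
        hac.symm, hbd.symm]
  have hcl := hc C hcyc
  exact hcl (by simp [C, Walk.support_cons]) (by simp [C, Walk.support_cons]) hac

lemma adj_of_c5 {H : SimpleGraph W} (hc : CliqueCycles H) {a b c d e : W}
    (hab : H.Adj a b) (hbc : H.Adj b c) (hcd : H.Adj c d) (hde : H.Adj d e) (hea : H.Adj e a)
    (hac : a ≠ c) (had : a ≠ d) (hbd : b ≠ d) (hbe : b ≠ e) (hce : c ≠ e) : H.Adj a c := by
  let C : H.Walk a a := .cons hab (.cons hbc (.cons hcd (.cons hde (.cons hea .nil))))
  have n1 : a ≠ b := hab.ne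
  have n2 : b ≠ c := hbc.ne
  have n3 : c ≠ d := hcd.ne
  have n4 : d ≠ e := hde.ne
  have n5 : e ≠ a := hea.ne
  have hcyc : C.IsCycle := by
    rw [Walk.cons_isCycle_iff]
    constructor
    · rw [Walk.isPath_def]
      simp [n1, n2, n3, n4, n5, hac, had, hbd, hbe, hce, n1.symm, n2.symm, n3.symm, n4.symm,
        n5.symm, hac.symm, had.symm, hbd.symm, hbe.symm, hce.symm]
    · simp [Sym2.eq_iff, n1, n2, n3, n4, n5, hac, had, hbd, hbe, hce, n1.symm, n2.symm, n3.symm,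
        n4.symm, n5.symm, hac.symm, had.symm, hbd.symm, hbe.symm, hce.symm]
  have hcl := hc C hcyc
  exact hcl (by simp [C, Walk.support_cons]) (by simp [C, Walk.support_cons]) hac

lemma backclique {H : SimpleGraph W} (hc : CliqueCycles H) {r x y z : W}
    (hxy : H.Adj x y) (hxz : H.Adj x z) (hyz : y ≠ z) (hry : H.Reachable r y)
    (hrz : H.Reachable r z) (hy : H.dist r y ≤ H.dist r x) (hz : H.dist r z ≤ H.dist r x) :
    H.Adj y z := by
  classical
  by_contra hne
  obtain ⟨p, hp⟩ := hry.exists_walk_length_eq_dist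
  obtain ⟨q, hq⟩ := hrz.exists_walk_length_eq_dist
  have hnotin : ∀ (c : W) (t : H.Walk r c), t.length = H.dist r c → H.dist r c ≤ H.dist r x →
      H.Adj x c → x ∉ t.support := by
    intro c t ht hdc hadj hmem
    have h1 : H.dist r x ≤ (t.takeUntil x hmem).length := H.dist_le _
    have h2 : H.dist x c ≤ (t.dropUntil x hmem).length := H.dist_le _
    have h3 : (t.takeUntil x hmem).length + (t.dropUntil x hmem).length = t.length := by
      rw [← Walk.length_append, Walk.take_spec]
    have h4 : H.dist x c ≠ 0 := by
      intro h0
      rcases (SimpleGraph.dist_eq_zero_iff_eq_or_not_reachable).mp h0 with rfl | hnr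
      · exact hadj.ne rfl
      · exact hnr hadj.reachable
    omega
  have hxp : x ∉ p.support := hnotin y p hp hy hxy
  have hxq : x ∉ q.support := hnotin z q hq hz hxz
  let Wb : H.Walk y z := p.reverse.append q
  have hxWb : x ∉ Wb.support := by
    intro hmem
    rw [Walk.mem_support_append_iff] at hmem
    rcases hmem with hmem | hmem
    · exact hxp (by rwa [Walk.support_reverse, List.mem_reverse] at hmem)
    · exact hxq hmem
  let P := Wb.bypass
  have hPpath : P.IsPath := Wb.bypass_isPath
  have hxP : x ∉ P.support := fun hmem => hxWb (Wb.support_bypass_subset hmem)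
  let Q : H.Walk y x := P.concat hxz.symm
  have hQpath : Q.IsPath := by
    rw [Walk.isPath_def, Walk.support_concat]
    rw [List.nodup_append]
    exact ⟨hPpath.support_nodup, List.nodup_singleton _,
      fun a ha b hb hab => hxP (by rw [List.mem_singleton] at hb; rw [← hb, ← hab]; exact ha)⟩
  have hcyc : (Walk.cons hxy Q).IsCycle := by
    rw [Walk.cons_isCycle_iff]
    refine ⟨hQpath, ?_⟩
    intro hmem
    rw [Walk.edges_concat, List.concat_eq_append, List.mem_append] at hmem
    rcases hmem with hmem | hmem
    · exact hxP (Walk.fst_mem_support_of_mem_edges P hmem)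
    · rw [List.mem_singleton, Sym2.eq_iff] at hmem
      rcases hmem with ⟨rfl, rfl⟩ | ⟨h1, rfl⟩
      · exact hxz.ne rfl
      · exact hyz rfl
  have hcl := hc _ hcyc
  refine hne (hcl ?_ ?_ hyz)
  · show y ∈ (Walk.cons hxy Q).support
    rw [Walk.support_cons]
    exact List.mem_cons_of_mem _ Q.start_mem_support
  · show z ∈ (Walk.cons hxy Q).support
    rw [Walk.support_cons]
    refine List.mem_cons_of_mem _ ?_
    rw [Walk.support_concat, List.mem_append]
    exact Or.inl P.end_mem_support



section Construction

open scoped Classical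

variable [Fintype W] [LinearOrder W]

/-- fill injection with default -/
noncomputable def fillInj {α β : Type*} [LinearOrder α] [LinearOrder β]
    (A : Finset α) (B : Finset β) (d : β) (a : α) : β :=
  if h : a ∈ A ∧ A.card ≤ B.card then
    ((B.orderIsoOfFin rfl) ⟨((A.orderIsoOfFin rfl).symm ⟨a, h.1⟩ : Fin A.card),
      lt_of_lt_of_le (Fin.is_lt _) h.2⟩ : β)
  else d

lemma fillInj_mem {α β : Type*} [LinearOrder α] [LinearOrder β]
    {A : Finset α} {B : Finset β} {d : β} {a : α} (ha : a ∈ A) (hc : A.card ≤ B.card) :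
    fillInj A B d a ∈ B := by
  simp only [fillInj]
  rw [dif_pos ⟨ha, hc⟩]
  exact Finset.coe_mem _

lemma fillInj_inj {α β : Type*} [LinearOrder α] [LinearOrder β]
    {A : Finset α} {B : Finset β} {d : β} {a a' : α} (ha : a ∈ A) (ha' : a' ∈ A)
    (hc : A.card ≤ B.card) (heq : fillInj A B d a = fillInj A B d a') : a = a' := by
  simp only [fillInj] at heq
  rw [dif_pos ⟨ha, hc⟩, dif_pos ⟨ha', hc⟩] at heq
  have h1 := Subtype.ext heq
  have h2 := (B.orderIsoOfFin rfl).injective h1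
  have h2' := congrArg Fin.val h2
  exact congrArg Subtype.val ((A.orderIsoOfFin rfl).symm.injective (Fin.ext h2'))

variable (H : SimpleGraph W) (u : W) (s : Finset W) (k : ℕ)

noncomputable def nbr (v : W) : Finset W := (H.neighborSet v).toFinite.toFinset

/-- the color given to witnesses: positions `1..k` -/
noncomputable def ecol (w : W) : ℕ :=
  if h : w ∈ s then ((s.equivFin ⟨w, h⟩ : Fin s.card) : ℕ) + 1 else 0

/-- the class (clique) of `y` within `N(u)` -/
noncomputable def cls (y : W) : Finset W := insert y (nbr H u ∩ nbr H y)

noncomputable def classColor (y : W) : ℕ :=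
  if y ∈ s then ecol s y
  else fillInj (cls H u y \ s)
    (Finset.Icc 1 k \ ((cls H u y ∩ s).image (ecol s))) 0 y

noncomputable def Mw (w : W) : Finset ℕ :=
  Finset.Icc 1 k \ ((cls H u w).image (classColor H u s k))

noncomputable def Pw (w : W) : Finset W := nbr H w \ insert u (nbr H u)

noncomputable def phi (w : W) : ℕ → W := fillInj (Mw H u s k w) (Pw H u w) u

noncomputable def pc (x : W) : Finset ℕ :=
  (Finset.Icc 1 k).filter (fun m => ∃ w ∈ s, m ∈ Mw H u s k w ∧ phi H u s k w m = x)

def PresP (x : W) : Prop := x = u ∨ x ∈ nbr H u ∨ (pc H u s k x).Nonempty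

noncomputable def presColor (x : W) : ℕ :=
  if x = u then k + 1
  else if x ∈ nbr H u then classColor H u s k x
  else if h : (pc H u s k x).Nonempty then (pc H u s k x).min' h else 0

noncomputable def root (x : W) : W :=
  if H.Reachable u x then u else Quot.out (H.connectedComponentMk x)

noncomputable def rnk (x : W) : ℕ := H.dist (root H u x) x

noncomputable def keyM (x : W) : ℕ :=
  (if PresP H u s k x then 0 else rnk H u x + 1) * (Fintype.card W + 1)
    + (Fintype.equivFin W x : ℕ)

noncomputable def col : W → ℕ :=
  (measure (keyM H u s k)).wf.fix
    (fun x ih =>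
      if PresP H u s k x then presColor H u s k x
      else sInf {c | c ∈ Finset.Icc 1 (k+1) ∧
        ∀ y (hy : keyM H u s k y < keyM H u s k x), H.Adj x y → ih y hy ≠ c})

lemma col_eq (x : W) :
    col H u s k x = if PresP H u s k x then presColor H u s k x
      else sInf {c | c ∈ Finset.Icc 1 (k+1) ∧
        ∀ y, keyM H u s k y < keyM H u s k x → H.Adj x y → col H u s k y ≠ c} := by
  rw [col, WellFounded.fix_eq]

variable {H : SimpleGraph W} {u : W} {s : Finset W} {k : ℕ}

lemma mem_nbr {v x : W} : x ∈ nbr H v ↔ H.Adj v x := by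
  rw [nbr, Set.Finite.mem_toFinset, mem_neighborSet]

lemma card_nbr (v : W) : (nbr H v).card = (H.neighborSet v).ncard := by
  rw [nbr, Set.ncard_eq_toFinset_card]

lemma ecol_mem {w : W} (hw : w ∈ s) (hcard : s.card = k) : ecol s w ∈ Finset.Icc 1 k := by
  simp only [ecol]
  rw [dif_pos hw, Finset.mem_Icc]
  have := (s.equivFin ⟨w, hw⟩).isLt
  omega

lemma ecol_inj {w w' : W} (hw : w ∈ s) (hw' : w' ∈ s) (h : ecol s w = ecol s w') : w = w' := by
  simp only [ecol] at h
  rw [dif_pos hw, dif_pos hw'] at h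
  have h2 : s.equivFin ⟨w, hw⟩ = s.equivFin ⟨w', hw'⟩ := Fin.ext (by omega)
  have := s.equivFin.injective h2
  exact congrArg Subtype.val this


lemma cls_subset {y : W} (hy : y ∈ nbr H u) : cls H u y ⊆ nbr H u := by
  intro z hz
  rcases Finset.mem_insert.mp hz with rfl | hz'
  · exact hy
  · exact (Finset.mem_inter.mp hz').1

lemma mem_cls_self (y : W) : y ∈ cls H u y := Finset.mem_insert_self _ _

lemma mem_cls_iff {y z : W} (hy : y ∈ nbr H u) :
    z ∈ cls H u y ↔ z ∈ nbr H u ∧ (z = y ∨ H.Adj z y) := by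
  rw [cls, Finset.mem_insert, Finset.mem_inter]
  constructor
  · rintro (rfl | ⟨h1, h2⟩)
    · exact ⟨hy, Or.inl rfl⟩
    · exact ⟨h1, Or.inr (mem_nbr.mp h2).symm⟩
  · rintro ⟨h1, rfl | h2⟩
    · exact Or.inl rfl
    · exact Or.inr ⟨h1, mem_nbr.mpr h2.symm⟩

lemma u_not_mem_nbr : u ∉ nbr H u := fun h => H.loopless.irrefl u (mem_nbr.mp h)

lemma cls_clique (hcyc : CliqueCycles H) {y a b : W} (hy : y ∈ nbr H u)
    (ha : a ∈ cls H u y) (hb : b ∈ cls H u y) (hab : a ≠ b) : H.Adj a b := by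
  obtain ⟨ha1, ha2⟩ := (mem_cls_iff hy).mp ha
  obtain ⟨hb1, hb2⟩ := (mem_cls_iff hy).mp hb
  have hua : H.Adj u a := mem_nbr.mp ha1
  have hub : H.Adj u b := mem_nbr.mp hb1
  have huy : H.Adj u y := mem_nbr.mp hy
  rcases ha2 with rfl | ha3
  · rcases hb2 with rfl | hb3
    · exact absurd rfl hab
    · exact hb3.symm
  · rcases hb2 with rfl | hb3
    · exact ha3
    · exact adj_of_c4 hcyc ha3 hb3.symm hub.symm hua hab huy.ne'

lemma cls_eq (hcyc : CliqueCycles H) {y z : W} (hy : y ∈ nbr H u) (hz : z ∈ cls H u y) :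
    cls H u z = cls H u y := by
  obtain ⟨hz1, hz2⟩ := (mem_cls_iff hy).mp hz
  have huy : H.Adj u y := mem_nbr.mp hy
  have huz : H.Adj u z := mem_nbr.mp hz1
  ext t
  rw [mem_cls_iff hz1, mem_cls_iff hy]
  constructor
  · rintro ⟨ht1, ht2⟩
    refine ⟨ht1, ?_⟩
    have hut : H.Adj u t := mem_nbr.mp ht1
    rcases ht2 with rfl | ht3
    · exact hz2
    · by_cases hty : t = y
      · exact Or.inl hty
      · rcases hz2 with rfl | hz3
        · exact Or.inr ht3
        · exact Or.inr (adj_of_c4 hcyc ht3 hz3 huy.symm hut hty huz.ne')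
  · rintro ⟨ht1, ht2⟩
    refine ⟨ht1, ?_⟩
    have hut : H.Adj u t := mem_nbr.mp ht1
    rcases ht2 with rfl | ht3
    · rcases hz2 with rfl | hz3
      · exact Or.inl rfl
      · exact Or.inr hz3.symm
    · by_cases htz : t = z
      · exact Or.inl htz
      · rcases hz2 with rfl | hz3
        · exact Or.inr ht3
        · exact Or.inr (adj_of_c4 hcyc ht3 hz3.symm huz.symm hut htz huy.ne')

lemma cls_card_le (hcyc : CliqueCycles H)
    (hclq : ∀ t : Finset W, H.IsClique ↑t → t.card ≤ k + 1)
    {y : W} (hy : y ∈ nbr H u) : (cls H u y).card ≤ k := by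
  have hclique : H.IsClique ↑(insert u (cls H u y)) := by
    intro a ha b hb hab
    rw [Finset.coe_insert, Set.mem_insert_iff] at ha hb
    rcases ha with rfl | ha'
    · rcases hb with rfl | hb'
      · exact absurd rfl hab
      · exact mem_nbr.mp (cls_subset hy hb')
    · rcases hb with rfl | hb'
      · exact (mem_nbr.mp (cls_subset hy ha')).symm
      · exact cls_clique hcyc hy ha' hb' hab
  have hcard := hclq _ hclique
  rwa [Finset.card_insert_of_notMem (fun h => u_not_mem_nbr (cls_subset hy h)),
    Nat.add_le_add_iff_right] at hcard

lemma classColor_eq_ecol {y : W} (hy : y ∈ s) : classColor H u s k y = ecol s y := by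
  rw [classColor, if_pos hy]

lemma card_sdiff_s {y : W} (hcyc : CliqueCycles H)
    (hclq : ∀ t : Finset W, H.IsClique ↑t → t.card ≤ k + 1)
    (hy : y ∈ nbr H u) (hcard : s.card = k) :
    (cls H u y \ s).card ≤ (Finset.Icc 1 k \ ((cls H u y ∩ s).image (ecol s))).card := by
  have h1 : ((cls H u y ∩ s).image (ecol s)).card = (cls H u y ∩ s).card :=
    Finset.card_image_of_injOn (fun a ha b hb hab =>
      ecol_inj (Finset.mem_inter.mp ha).2 (Finset.mem_inter.mp hb).2 hab)
  have h2 : (cls H u y ∩ s).image (ecol s) ⊆ Finset.Icc 1 k := by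
    intro m hm
    obtain ⟨a, ha, rfl⟩ := Finset.mem_image.mp hm
    exact ecol_mem (Finset.mem_inter.mp ha).2 hcard
  have h3 := Finset.card_sdiff_of_subset h2
  have h4 : (Finset.Icc 1 k).card = k := by rw [Nat.card_Icc]; omega
  have h5 : (cls H u y ∩ s).card + (cls H u y \ s).card = (cls H u y).card :=
    Finset.card_inter_add_card_sdiff _ _
  have h6 := cls_card_le hcyc hclq hy
  omega

lemma classColor_mem (hcyc : CliqueCycles H)
    (hclq : ∀ t : Finset W, H.IsClique ↑t → t.card ≤ k + 1)
    {y : W} (hy : y ∈ nbr H u) (hcard : s.card = k) :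
    classColor H u s k y ∈ Finset.Icc 1 k := by
  rw [classColor]
  split_ifs with hys
  · exact ecol_mem hys hcard
  · have hmem := fillInj_mem (A := cls H u y \ s)
      (B := Finset.Icc 1 k \ ((cls H u y ∩ s).image (ecol s))) (d := 0) (a := y)
      (Finset.mem_sdiff.mpr ⟨mem_cls_self y, hys⟩) (card_sdiff_s hcyc hclq hy hcard)
    exact (Finset.mem_sdiff.mp hmem).1

lemma classColor_not_used (hcyc : CliqueCycles H)
    (hclq : ∀ t : Finset W, H.IsClique ↑t → t.card ≤ k + 1)
    {y : W} (hy : y ∈ nbr H u) (hcard : s.card = k) (hys : y ∉ s) :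
    classColor H u s k y ∉ (cls H u y ∩ s).image (ecol s) := by
  rw [classColor, if_neg hys]
  have hmem := fillInj_mem (A := cls H u y \ s)
    (B := Finset.Icc 1 k \ ((cls H u y ∩ s).image (ecol s))) (d := 0) (a := y)
    (Finset.mem_sdiff.mpr ⟨mem_cls_self y, hys⟩) (card_sdiff_s hcyc hclq hy hcard)
  exact (Finset.mem_sdiff.mp hmem).2

lemma classColor_inj (hcyc : CliqueCycles H)
    (hclq : ∀ t : Finset W, H.IsClique ↑t → t.card ≤ k + 1)
    {y z : W} (hy : y ∈ nbr H u) (hz : z ∈ cls H u y) (hcard : s.card = k)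
    (heq : classColor H u s k y = classColor H u s k z) : y = z := by
  have hz1 : z ∈ nbr H u := cls_subset hy hz
  have hcls : cls H u z = cls H u y := cls_eq hcyc hy hz
  by_cases hys : y ∈ s <;> by_cases hzs : z ∈ s
  · rw [classColor_eq_ecol hys, classColor_eq_ecol hzs] at heq
    exact ecol_inj hys hzs heq
  · exfalso
    apply classColor_not_used hcyc hclq hz1 hcard hzs
    rw [← heq, classColor_eq_ecol hys, hcls]
    exact Finset.mem_image_of_mem _ (Finset.mem_inter.mpr ⟨mem_cls_self y, hys⟩)
  · exfalso
    apply classColor_not_used hcyc hclq hy hcard hys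
    rw [heq, classColor_eq_ecol hzs]
    exact Finset.mem_image_of_mem _ (Finset.mem_inter.mpr ⟨hz, hzs⟩)
  · rw [classColor, if_neg hys, classColor, if_neg hzs, hcls] at heq
    exact fillInj_inj (Finset.mem_sdiff.mpr ⟨mem_cls_self y, hys⟩)
      (Finset.mem_sdiff.mpr ⟨hcls ▸ mem_cls_self z, hzs⟩)
      (card_sdiff_s hcyc hclq hy hcard) heq

lemma classColor_injOn (hcyc : CliqueCycles H)
    (hclq : ∀ t : Finset W, H.IsClique ↑t → t.card ≤ k + 1)
    {w : W} (hw : w ∈ nbr H u) (hcard : s.card = k) :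
    Set.InjOn (classColor H u s k) ↑(cls H u w) := by
  intro a ha b hb hab
  have ha' : a ∈ nbr H u := cls_subset hw ha
  have hcls : cls H u a = cls H u w := cls_eq hcyc hw ha
  exact classColor_inj hcyc hclq ha' (hcls ▸ hb) hcard hab

lemma Mw_card (hcyc : CliqueCycles H)
    (hclq : ∀ t : Finset W, H.IsClique ↑t → t.card ≤ k + 1)
    {w : W} (hw : w ∈ nbr H u) (hcard : s.card = k) :
    (Mw H u s k w).card = k - (cls H u w).card := by
  rw [Mw, Finset.card_sdiff_of_subset]
  · rw [Finset.card_image_of_injOn (classColor_injOn hcyc hclq hw hcard), Nat.card_Icc]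
    omega
  · intro m hm
    obtain ⟨a, ha, rfl⟩ := Finset.mem_image.mp hm
    exact classColor_mem hcyc hclq (cls_subset hw ha) hcard

lemma nbr_inter {w : W} (hw : w ∈ nbr H u) :
    nbr H w ∩ insert u (nbr H u) = insert u ((cls H u w).erase w) := by
  have huw : H.Adj u w := mem_nbr.mp hw
  ext z
  rw [Finset.mem_inter, Finset.mem_insert, Finset.mem_insert, Finset.mem_erase]
  constructor
  · rintro ⟨h1, rfl | h2⟩
    · exact Or.inl rfl
    · have hwz : H.Adj w z := mem_nbr.mp h1
      exact Or.inr ⟨hwz.ne', (mem_cls_iff hw).mpr ⟨h2, Or.inr hwz.symm⟩⟩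
  · rintro (rfl | ⟨h1, h2⟩)
    · exact ⟨mem_nbr.mpr huw.symm, Or.inl rfl⟩
    · obtain ⟨h3, h4⟩ := (mem_cls_iff hw).mp h2
      rcases h4 with rfl | h5
      · exact absurd rfl h1
      · exact ⟨mem_nbr.mpr h5.symm, Or.inr h3⟩

lemma Pw_card {w : W} (hw : w ∈ nbr H u) :
    (Pw H u w).card = (nbr H w).card - (cls H u w).card := by
  have h1 : (Pw H u w).card + (nbr H w ∩ insert u (nbr H u)).card = (nbr H w).card :=
    Finset.card_sdiff_add_card_inter _ _
  have h2 : (nbr H w ∩ insert u (nbr H u)).card = (cls H u w).card := by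
    rw [nbr_inter hw, Finset.card_insert_of_notMem
      (fun h => u_not_mem_nbr (cls_subset hw (Finset.mem_of_mem_erase h))),
      Finset.card_erase_of_mem (mem_cls_self w)]
    have : 0 < (cls H u w).card := Finset.card_pos.mpr ⟨w, mem_cls_self w⟩
    omega
  omega

lemma Mw_le_Pw (hcyc : CliqueCycles H)
    (hclq : ∀ t : Finset W, H.IsClique ↑t → t.card ≤ k + 1)
    {w : W} (hw : w ∈ nbr H u) (hcard : s.card = k)
    (hdeg : k ≤ (H.neighborSet w).ncard) :
    (Mw H u s k w).card ≤ (Pw H u w).card := by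
  rw [Mw_card hcyc hclq hw hcard, Pw_card hw, card_nbr]
  omega

lemma phi_mem_Pw {w : W} {m : ℕ} (hm : m ∈ Mw H u s k w)
    (hle : (Mw H u s k w).card ≤ (Pw H u w).card) : phi H u s k w m ∈ Pw H u w :=
  fillInj_mem hm hle

lemma phi_inj {w : W} {m m' : ℕ} (hm : m ∈ Mw H u s k w) (hm' : m' ∈ Mw H u s k w)
    (hle : (Mw H u s k w).card ≤ (Pw H u w).card)
    (heq : phi H u s k w m = phi H u s k w m') : m = m' :=
  fillInj_inj hm hm' hle heq

lemma unique_nbr (hcyc : CliqueCycles H) {x y z : W} (hxu : x ∉ insert u (nbr H u))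
    (hy : y ∈ nbr H u) (hz : z ∈ nbr H u) (hxy : H.Adj x y) (hxz : H.Adj x z) : y = z := by
  by_contra hne
  rw [Finset.mem_insert] at hxu
  push_neg at hxu
  have huy : H.Adj u y := mem_nbr.mp hy
  have huz : H.Adj u z := mem_nbr.mp hz
  have : H.Adj x u := adj_of_c4 hcyc hxy huy.symm huz hxz.symm hxu.1 hne
  exact hxu.2 (mem_nbr.mpr this.symm)

lemma Pw_unique (hcyc : CliqueCycles H) {x w w' : W} (hw : w ∈ nbr H u) (hw' : w' ∈ nbr H u)
    (hx : x ∈ Pw H u w) (hx' : x ∈ Pw H u w') : w = w' := by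
  obtain ⟨hx1, hx2⟩ := Finset.mem_sdiff.mp hx
  obtain ⟨hx1', _⟩ := Finset.mem_sdiff.mp hx'
  exact unique_nbr hcyc hx2 hw hw' (mem_nbr.mp hx1).symm (mem_nbr.mp hx1').symm

lemma Mw_subset_Icc {w : W} : Mw H u s k w ⊆ Finset.Icc 1 k := fun m hm =>
  (Finset.mem_sdiff.mp hm).1

lemma pc_phi (hcyc : CliqueCycles H) (hu' : ↑s ⊆ H.neighborSet u)
    (hMP : ∀ w ∈ s, (Mw H u s k w).card ≤ (Pw H u w).card)
    {w : W} {m : ℕ} (hws : w ∈ s) (hm : m ∈ Mw H u s k w) :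
    pc H u s k (phi H u s k w m) = {m} := by
  have hwn : w ∈ nbr H u := mem_nbr.mpr (hu' hws)
  ext m'
  rw [pc, Finset.mem_filter, Finset.mem_singleton]
  constructor
  · rintro ⟨_, w', hw's, hm', hphi⟩
    have hwn' : w' ∈ nbr H u := mem_nbr.mpr (hu' hw's)
    have hxw : phi H u s k w m ∈ Pw H u w := phi_mem_Pw hm (hMP w hws)
    have hxw' : phi H u s k w m ∈ Pw H u w' := hphi ▸ phi_mem_Pw hm' (hMP w' hw's)
    have : w' = w := Pw_unique hcyc hwn' hwn hxw' hxw
    subst this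
    exact phi_inj hm' hm (hMP w' hw's) hphi
  · rintro rfl
    exact ⟨Mw_subset_Icc hm, w, hws, hm, rfl⟩

lemma presColor_u : presColor H u s k u = k + 1 := by rw [presColor, if_pos rfl]

lemma presColor_nbr {y : W} (hy : y ∈ nbr H u) :
    presColor H u s k y = classColor H u s k y := by
  rw [presColor, if_neg (fun h => H.loopless.irrefl u (by rw [h] at hy; exact mem_nbr.mp hy)), if_pos hy]

lemma presColor_phi (hcyc : CliqueCycles H) (hu' : ↑s ⊆ H.neighborSet u)
    (hMP : ∀ w ∈ s, (Mw H u s k w).card ≤ (Pw H u w).card)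
    {w : W} {m : ℕ} (hws : w ∈ s) (hm : m ∈ Mw H u s k w) :
    presColor H u s k (phi H u s k w m) = m := by
  have hx : phi H u s k w m ∈ Pw H u w := phi_mem_Pw hm (hMP w hws)
  obtain ⟨_, hx2⟩ := Finset.mem_sdiff.mp hx
  rw [Finset.mem_insert] at hx2
  push_neg at hx2
  have hpc : pc H u s k (phi H u s k w m) = {m} := pc_phi hcyc hu' hMP hws hm
  rw [presColor, if_neg hx2.1, if_neg hx2.2, dif_pos (by rw [hpc]; exact Finset.singleton_nonempty m)]
  simp [hpc]

lemma exists_of_pc {x : W} (h : (pc H u s k x).Nonempty) :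
    ∃ w ∈ s, ∃ m ∈ Mw H u s k w, phi H u s k w m = x := by
  obtain ⟨m, hm⟩ := h
  simp only [pc, Finset.mem_filter] at hm
  obtain ⟨w, hw, hmw, hphi⟩ := hm.2
  exact ⟨w, hw, m, hmw, hphi⟩

lemma presColor_le_k {y : W} (hPy : PresP H u s k y) (hyu : y ≠ u)
    (hcyc : CliqueCycles H) (hclq : ∀ t : Finset W, H.IsClique ↑t → t.card ≤ k + 1)
    (hcard : s.card = k) : presColor H u s k y ∈ Finset.Icc 1 k := by
  by_cases hyn : y ∈ nbr H u
  · rw [presColor_nbr hyn]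
    exact classColor_mem hcyc hclq hyn hcard
  · rcases hPy with rfl | hyn' | hpc
    · exact absurd rfl hyu
    · exact absurd hyn' hyn
    · rw [presColor, if_neg hyu, if_neg hyn, dif_pos hpc]
      have := Finset.min'_mem _ hpc
      simp only [pc, Finset.mem_filter] at this
      exact this.1

lemma presColor_proper (hcyc : CliqueCycles H)
    (hclq : ∀ t : Finset W, H.IsClique ↑t → t.card ≤ k + 1)
    (hu' : ↑s ⊆ H.neighborSet u) (hcard : s.card = k)
    (hMP : ∀ w ∈ s, (Mw H u s k w).card ≤ (Pw H u w).card)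
    {x y : W} (hPx : PresP H u s k x) (hPy : PresP H u s k y) (hadj : H.Adj x y) :
    presColor H u s k x ≠ presColor H u s k y := by
  -- helper for the mixed nbr/chosen case
  have mixed : ∀ {a b : W}, a ∈ nbr H u → b ∉ insert u (nbr H u) → (pc H u s k b).Nonempty →
      H.Adj a b → presColor H u s k a ≠ presColor H u s k b := by
    intro a b han hbn hbpc hab
    obtain ⟨w, hws, m, hmw, hphi⟩ := exists_of_pc hbpc
    have hwn : w ∈ nbr H u := mem_nbr.mpr (hu' hws)
    have hbPw : b ∈ Pw H u w := hphi ▸ phi_mem_Pw hmw (hMP w hws)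
    have hbw : H.Adj w b := mem_nbr.mp (Finset.mem_sdiff.mp hbPw).1
    have haw : a = w := unique_nbr hcyc hbn han hwn hab.symm hbw.symm
    subst haw
    have h1 : presColor H u s k b = m := by rw [← hphi]; exact presColor_phi hcyc hu' hMP hws hmw
    have h2 : m ∉ (cls H u a).image (classColor H u s k) := (Finset.mem_sdiff.mp hmw).2
    rw [presColor_nbr han, h1]
    intro heq
    exact h2 (heq ▸ Finset.mem_image_of_mem _ (mem_cls_self a))
  by_cases hxu : x = u
  · have hyu : y ≠ u := fun h => hadj.ne (hxu.trans h.symm)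
    have := presColor_le_k hPy hyu hcyc hclq hcard
    rw [Finset.mem_Icc] at this
    rw [hxu, presColor_u]
    omega
  · by_cases hyu : y = u
    · have := presColor_le_k hPx hxu hcyc hclq hcard
      rw [Finset.mem_Icc] at this
      rw [hyu, presColor_u]
      omega
    · by_cases hxn : x ∈ nbr H u <;> by_cases hyn : y ∈ nbr H u
      · rw [presColor_nbr hxn, presColor_nbr hyn]
        intro heq
        have hycls : y ∈ cls H u x := (mem_cls_iff hxn).mpr ⟨hyn, Or.inr hadj.symm⟩
        exact hadj.ne (classColor_inj hcyc hclq hxn hycls hcard heq)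
      · have hyn' : y ∉ insert u (nbr H u) := by
          rw [Finset.mem_insert]; push_neg; exact ⟨hyu, hyn⟩
        have hypc : (pc H u s k y).Nonempty := by
          rcases hPy with rfl | h | h
          · exact absurd rfl hyu
          · exact absurd h hyn
          · exact h
        exact mixed hxn hyn' hypc hadj
      · have hxn' : x ∉ insert u (nbr H u) := by
          rw [Finset.mem_insert]; push_neg; exact ⟨hxu, hxn⟩
        have hxpc : (pc H u s k x).Nonempty := by
          rcases hPx with rfl | h | h
          · exact absurd rfl hxu
          · exact absurd h hxn
          · exact h
        exact (mixed hyn hxn' hxpc hadj.symm).symm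
      · -- both chosen
        have hxn' : x ∉ insert u (nbr H u) := by
          rw [Finset.mem_insert]; push_neg; exact ⟨hxu, hxn⟩
        have hyn' : y ∉ insert u (nbr H u) := by
          rw [Finset.mem_insert]; push_neg; exact ⟨hyu, hyn⟩
        have hxpc : (pc H u s k x).Nonempty := by
          rcases hPx with rfl | h | h
          · exact absurd rfl hxu
          · exact absurd h hxn
          · exact h
        have hypc : (pc H u s k y).Nonempty := by
          rcases hPy with rfl | h | h
          · exact absurd rfl hyu
          · exact absurd h hyn
          · exact h
        obtain ⟨w, hws, m, hmw, hphi⟩ := exists_of_pc hxpc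
        obtain ⟨w', hw's, m', hm'w, hphi'⟩ := exists_of_pc hypc
        have hwn : w ∈ nbr H u := mem_nbr.mpr (hu' hws)
        have hw'n : w' ∈ nbr H u := mem_nbr.mpr (hu' hw's)
        have hxPw : x ∈ Pw H u w := hphi ▸ phi_mem_Pw hmw (hMP w hws)
        have hyPw : y ∈ Pw H u w' := hphi' ▸ phi_mem_Pw hm'w (hMP w' hw's)
        have h1 : presColor H u s k x = m := by
          rw [← hphi]; exact presColor_phi hcyc hu' hMP hws hmw
        have h2 : presColor H u s k y = m' := by
          rw [← hphi']; exact presColor_phi hcyc hu' hMP hw's hm'w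
        by_cases hww' : w = w'
        · subst hww'
          rw [h1, h2]
          intro heq
          subst heq
          exact hadj.ne (hphi.symm.trans hphi')
        · exfalso
          have hwx : H.Adj w x := mem_nbr.mp (Finset.mem_sdiff.mp hxPw).1
          have hw'y : H.Adj w' y := mem_nbr.mp (Finset.mem_sdiff.mp hyPw).1
          have hux : u ≠ x := fun h => hxu h.symm
          have huy : u ≠ y := fun h => hyu h.symm
          have hwy : w ≠ y := fun h => hyn (h ▸ hwn)
          have hxw' : x ≠ w' := fun h => hxn (h ▸ hw'n)
          have : H.Adj u x := adj_of_c5 hcyc (mem_nbr.mp hwn) hwx hadj hw'y.symm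
            (mem_nbr.mp hw'n).symm hux huy hwy hww' hxw'
          exact hxn (mem_nbr.mpr this)

lemma reachable_root (x : W) : H.Reachable (root H u x) x := by
  rw [root]
  split_ifs with h
  · exact h
  · have heq : H.connectedComponentMk (Quot.out (H.connectedComponentMk x))
        = H.connectedComponentMk x := Quot.out_eq _
    exact (SimpleGraph.ConnectedComponent.eq).mp heq

lemma root_adj {x y : W} (hadj : H.Adj x y) : root H u x = root H u y := by
  rw [root, root]
  have hiff : H.Reachable u x ↔ H.Reachable u y :=
    ⟨fun h => h.trans hadj.reachable, fun h => h.trans hadj.symm.reachable⟩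
  split_ifs with h1 h2 h2
  · rfl
  · exact absurd (hiff.mp h1) h2
  · exact absurd (hiff.mpr h2) h1
  · congr 1
    exact SimpleGraph.ConnectedComponent.eq.mpr hadj.reachable

lemma root_eq_u {x : W} (h : H.Reachable u x) : root H u x = u := if_pos h

lemma rnk_of_reach {x : W} (h : H.Reachable u x) : rnk H u x = H.dist u x := by
  rw [rnk, root_eq_u h]

lemma pres_dist (hu' : ↑s ⊆ H.neighborSet u)
    (hMP : ∀ w ∈ s, (Mw H u s k w).card ≤ (Pw H u w).card)
    {x : W} (hP : PresP H u s k x) : H.Reachable u x ∧ H.dist u x ≤ 2 := by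
  rcases hP with rfl | h | h
  · exact ⟨Reachable.refl _, by rw [SimpleGraph.dist_self]; omega⟩
  · have hadj : H.Adj u x := mem_nbr.mp h
    have := H.dist_le (Walk.cons hadj Walk.nil)
    simp only [Walk.length_cons, Walk.length_nil] at this
    exact ⟨hadj.reachable, by omega⟩
  · obtain ⟨w, hws, m, hmw, hphi⟩ := exists_of_pc h
    have hxPw : x ∈ Pw H u w := hphi ▸ phi_mem_Pw hmw (hMP w hws)
    have hwx : H.Adj w x := mem_nbr.mp (Finset.mem_sdiff.mp hxPw).1
    have huw : H.Adj u w := hu' hws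
    have := H.dist_le (Walk.cons huw (Walk.cons hwx Walk.nil))
    simp only [Walk.length_cons, Walk.length_nil] at this
    exact ⟨huw.reachable.trans hwx.reachable, by omega⟩

lemma unpres_dist {x : W} (h1 : ¬ PresP H u s k x) (h2 : H.Reachable u x) :
    2 ≤ H.dist u x := by
  rw [PresP] at h1
  push_neg at h1
  obtain ⟨hxu, hxn, _⟩ := h1
  have hne0 : H.dist u x ≠ 0 := by
    intro h0
    rcases SimpleGraph.dist_eq_zero_iff_eq_or_not_reachable.mp h0 with rfl | hr
    · exact hxu rfl
    · exact hr h2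
  have hne1 : H.dist u x ≠ 1 := by
    intro h0
    exact hxn (mem_nbr.mpr (SimpleGraph.dist_eq_one_iff_adj.mp h0))
  omega

lemma nat_key_split {p q a b N : ℕ} (ha : a < N + 1) (hb : b < N + 1)
    (h : p * (N + 1) + a = q * (N + 1) + b) : p = q ∧ a = b := by
  have h1 : (p * (N + 1) + a) % (N + 1) = a := by
    rw [Nat.mul_comm, Nat.add_comm, Nat.add_mul_mod_self_left, Nat.mod_eq_of_lt ha]
  have h2 : (q * (N + 1) + b) % (N + 1) = b := by
    rw [Nat.mul_comm, Nat.add_comm, Nat.add_mul_mod_self_left, Nat.mod_eq_of_lt hb]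
  have hab : a = b := by rw [← h1, ← h2, h]
  subst hab
  refine ⟨?_, rfl⟩
  have := Nat.eq_of_mul_eq_mul_right (Nat.succ_pos N) (by omega : p * (N + 1) = q * (N + 1))
  exact this

lemma keyM_inj {x y : W} (h : keyM H u s k x = keyM H u s k y) : x = y := by
  rw [keyM, keyM] at h
  have := nat_key_split (N := Fintype.card W)
    (lt_trans (Fin.is_lt _) (Nat.lt_succ_self _)) (lt_trans (Fin.is_lt _) (Nat.lt_succ_self _)) h
  exact (Fintype.equivFin W).injective (Fin.ext this.2)

lemma keyM_lt_of_pres {x y : W} (hx : ¬ PresP H u s k x) (hy : PresP H u s k y) :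
    keyM H u s k y < keyM H u s k x := by
  rw [keyM, keyM, if_pos hy, if_neg hx]
  have h1 : ((Fintype.equivFin W) y : ℕ) < Fintype.card W + 1 :=
    lt_of_lt_of_le (Fin.is_lt _) (by omega)
  have h2 : 1 * (Fintype.card W + 1) ≤ (rnk H u x + 1) * (Fintype.card W + 1) :=
    Nat.mul_le_mul_right _ (by omega)
  omega

lemma keyM_rank_le {x y : W} (hx : ¬ PresP H u s k x) (hy : ¬ PresP H u s k y)
    (h : keyM H u s k y < keyM H u s k x) : rnk H u y ≤ rnk H u x := by
  rw [keyM, keyM, if_neg hx, if_neg hy] at h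
  by_contra hlt
  push_neg at hlt
  have h2 : (rnk H u x + 2) * (Fintype.card W + 1) ≤ (rnk H u y + 1) * (Fintype.card W + 1) :=
    Nat.mul_le_mul_right _ (by omega)
  have h3 : ((Fintype.equivFin W) x : ℕ) < Fintype.card W + 1 :=
    lt_of_lt_of_le (Fin.is_lt _) (by omega)
  nlinarith [Nat.mul_le_mul_right (Fintype.card W + 1) (by omega : rnk H u x + 1 + 1 ≤ rnk H u y + 1)]

lemma col_pres {x : W} (hP : PresP H u s k x) : col H u s k x = presColor H u s k x := by
  rw [col_eq, if_pos hP]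

lemma col_unpres (hcyc : CliqueCycles H)
    (hclq : ∀ t : Finset W, H.IsClique ↑t → t.card ≤ k + 1)
    (hu' : ↑s ⊆ H.neighborSet u)
    (hMP : ∀ w ∈ s, (Mw H u s k w).card ≤ (Pw H u w).card)
    {x : W} (hx : ¬ PresP H u s k x) :
    col H u s k x ∈ Finset.Icc 1 (k+1) ∧
      ∀ y, keyM H u s k y < keyM H u s k x → H.Adj x y → col H u s k y ≠ col H u s k x := by
  classical
  set Ex : Finset W := Finset.univ.filter
    (fun y => H.Adj x y ∧ keyM H u s k y < keyM H u s k x) with hEx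
  have hxreach : H.Reachable (root H u x) x := reachable_root x
  have hclique : H.IsClique ↑(insert x Ex) := by
    intro a ha b hb hab
    rw [Finset.coe_insert, Set.mem_insert_iff, Finset.mem_coe, hEx, Finset.mem_filter] at ha hb
    have hmemEx : ∀ {c : W}, (c = x ∨ c ∈ Finset.univ ∧ H.Adj x c ∧
        keyM H u s k c < keyM H u s k x) → c ≠ x →
        H.Adj x c ∧ keyM H u s k c < keyM H u s k x := by
      rintro c (rfl | hc) hcx
      · exact absurd rfl hcx
      · exact hc.2
    rcases ha with rfl | ha'
    · rcases hb with rfl | hb'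
      · exact absurd rfl hab
      · exact hb'.2.1
    · rcases hb with rfl | hb'
      · exact ha'.2.1.symm
      · -- both earlier neighbors: use backclique
        obtain ⟨hadja, hkeya⟩ := ha'.2
        obtain ⟨hadjb, hkeyb⟩ := hb'.2
        have hdista : H.dist (root H u x) a ≤ H.dist (root H u x) x := by
          by_cases hPa : PresP H u s k a
          · have h1 := pres_dist hu' hMP hPa
            have h2 : H.Reachable u x := h1.1.trans hadja.symm.reachable
            have h3 := unpres_dist hx h2
            rw [root_eq_u h2]
            omega
          · have := keyM_rank_le hx hPa hkeya
            rw [rnk, rnk] at this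
            rw [root_adj hadja] at this ⊢
            exact this
        have hdistb : H.dist (root H u x) b ≤ H.dist (root H u x) x := by
          by_cases hPb : PresP H u s k b
          · have h1 := pres_dist hu' hMP hPb
            have h2 : H.Reachable u x := h1.1.trans hadjb.symm.reachable
            have h3 := unpres_dist hx h2
            rw [root_eq_u h2]
            omega
          · have := keyM_rank_le hx hPb hkeyb
            rw [rnk, rnk] at this
            rw [root_adj hadjb] at this ⊢
            exact this
        exact backclique hcyc hadja hadjb hab (hxreach.trans hadja.reachable)
          (hxreach.trans hadjb.reachable) hdista hdistb
  have hxEx : x ∉ Ex := by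
    rw [hEx, Finset.mem_filter]
    rintro ⟨-, hadj, -⟩
    exact H.loopless.irrefl x hadj
  have hcard : Ex.card ≤ k := by
    have h1 := hclq _ hclique
    rwa [Finset.card_insert_of_notMem hxEx, Nat.add_le_add_iff_right] at h1
  set F : Finset ℕ := Finset.Icc 1 (k+1) \ Ex.image (col H u s k) with hF
  have hFne : F.Nonempty := by
    rw [← Finset.card_pos]
    have h1 : (Finset.Icc 1 (k+1)).card - (Ex.image (col H u s k)).card ≤ F.card :=
      Finset.le_card_sdiff _ _
    have h2 : (Ex.image (col H u s k)).card ≤ k := le_trans (Finset.card_image_le) hcard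
    have h3 : (Finset.Icc 1 (k+1)).card = k + 1 := by rw [Nat.card_Icc]; omega
    omega
  set S : Set ℕ := {c | c ∈ Finset.Icc 1 (k+1) ∧
    ∀ y, keyM H u s k y < keyM H u s k x → H.Adj x y → col H u s k y ≠ c} with hS
  have hSne : S.Nonempty := by
    obtain ⟨c, hc⟩ := hFne
    rw [hF, Finset.mem_sdiff] at hc
    refine ⟨c, hc.1, ?_⟩
    intro y hky hadj heq
    exact hc.2 (Finset.mem_image.mpr ⟨y, by
      rw [hEx, Finset.mem_filter]; exact ⟨Finset.mem_univ y, hadj, hky⟩, heq⟩)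
  have hcol : col H u s k x = sInf S := by rw [col_eq, if_neg hx]
  have hmem := Nat.sInf_mem hSne
  rw [← hcol] at hmem
  exact hmem

lemma col_mem_Icc (hcyc : CliqueCycles H)
    (hclq : ∀ t : Finset W, H.IsClique ↑t → t.card ≤ k + 1)
    (hu' : ↑s ⊆ H.neighborSet u) (hcard : s.card = k)
    (hMP : ∀ w ∈ s, (Mw H u s k w).card ≤ (Pw H u w).card) (x : W) :
    col H u s k x ∈ Finset.Icc 1 (k+1) := by
  by_cases hP : PresP H u s k x
  · rw [col_pres hP]
    by_cases hxu : x = u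
    · rw [hxu, presColor_u, Finset.mem_Icc]
      omega
    · have := presColor_le_k hP hxu hcyc hclq hcard
      rw [Finset.mem_Icc] at this ⊢
      omega
  · exact (col_unpres hcyc hclq hu' hMP hP).1

lemma col_proper (hcyc : CliqueCycles H)
    (hclq : ∀ t : Finset W, H.IsClique ↑t → t.card ≤ k + 1)
    (hu' : ↑s ⊆ H.neighborSet u) (hcard : s.card = k)
    (hMP : ∀ w ∈ s, (Mw H u s k w).card ≤ (Pw H u w).card)
    {x y : W} (hadj : H.Adj x y) : col H u s k x ≠ col H u s k y := by
  by_cases hPx : PresP H u s k x <;> by_cases hPy : PresP H u s k y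
  · rw [col_pres hPx, col_pres hPy]
    exact presColor_proper hcyc hclq hu' hcard hMP hPx hPy hadj
  · exact ((col_unpres hcyc hclq hu' hMP hPy).2 x (keyM_lt_of_pres hPy hPx) hadj.symm)
  · exact ((col_unpres hcyc hclq hu' hMP hPx).2 y (keyM_lt_of_pres hPx hPy) hadj).symm
  · have hne : keyM H u s k x ≠ keyM H u s k y := fun h => hadj.ne (keyM_inj h)
    rcases lt_or_gt_of_ne hne with hlt | hlt
    · exact ((col_unpres hcyc hclq hu' hMP hPy).2 x hlt hadj.symm)
    · exact ((col_unpres hcyc hclq hu' hMP hPx).2 y hlt hadj).symm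

lemma ecol_surj (hcard : s.card = k) {j : ℕ} (hj1 : 1 ≤ j) (hj2 : j ≤ k) :
    ∃ w ∈ s, ecol s w = j := by
  have hlt : j - 1 < s.card := by omega
  set y := s.equivFin.symm ⟨j - 1, hlt⟩ with hy
  refine ⟨y.1, y.2, ?_⟩
  simp only [ecol]
  rw [dif_pos y.2]
  have h1 : (⟨y.1, y.2⟩ : {x // x ∈ s}) = y := rfl
  rw [h1, hy, Equiv.apply_symm_apply]
  simp
  omega

theorem exists_bstar_coloring (hcyc : CliqueCycles H)
    (hu' : ↑s ⊆ H.neighborSet u) (hcard : s.card = k)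
    (hdeg : ∀ v ∈ s, k ≤ (H.neighborSet v).ncard)
    (hclq : ∀ t : Finset W, H.IsClique ↑t → t.card ≤ k + 1) :
    IsBStarColoring H (k+1) (col H u s k) := by
  have hMP : ∀ w ∈ s, (Mw H u s k w).card ≤ (Pw H u w).card := fun w hw =>
    Mw_le_Pw hcyc hclq (mem_nbr.mpr (hu' hw)) hcard (hdeg w hw)
  have hPu : PresP H u s k u := Or.inl rfl
  have hcolu : col H u s k u = k + 1 := by rw [col_pres hPu, presColor_u]
  have hcol_s : ∀ w ∈ s, col H u s k w = ecol s w := by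
    intro w hw
    have hwn : w ∈ nbr H u := mem_nbr.mpr (hu' hw)
    rw [col_pres (Or.inr (Or.inl hwn)), presColor_nbr hwn, classColor_eq_ecol hw]
  have hwitness : ∀ j : ℕ, 1 ≤ j → j ≤ k → ∃ w ∈ s, col H u s k w = j := by
    intro j hj1 hj2
    obtain ⟨w, hw, hew⟩ := ecol_surj hcard hj1 hj2
    exact ⟨w, hw, by rw [hcol_s w hw, hew]⟩
  have hbw : ∀ w ∈ s, IsBVertex H (k+1) (col H u s k) w := by
    intro w hw
    have hwn : w ∈ nbr H u := mem_nbr.mpr (hu' hw)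
    intro m hm hmne
    rw [Set.mem_Icc] at hm
    by_cases hmk : m = k + 1
    · exact ⟨u, (hu' hw).symm, by rw [hcolu, hmk]⟩
    · have hmk' : m ≤ k := by omega
      by_cases hmim : m ∈ (cls H u w).image (classColor H u s k)
      · obtain ⟨y, hy, hyc⟩ := Finset.mem_image.mp hmim
        have hyn : y ∈ nbr H u := cls_subset hwn hy
        have hyw : y ≠ w := by
          intro h
          apply hmne
          rw [← hyc, h, col_pres (Or.inr (Or.inl hwn)), presColor_nbr hwn]
        have hadj : H.Adj w y := cls_clique hcyc hwn (mem_cls_self w) hy (Ne.symm hyw)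
        refine ⟨y, hadj, ?_⟩
        rw [col_pres (Or.inr (Or.inl hyn)), presColor_nbr hyn, hyc]
      · have hmMw : m ∈ Mw H u s k w := Finset.mem_sdiff.mpr
          ⟨Finset.mem_Icc.mpr ⟨hm.1, hmk'⟩, hmim⟩
        set y := phi H u s k w m with hydef
        have hyPw : y ∈ Pw H u w := phi_mem_Pw hmMw (hMP w hw)
        have hadj : H.Adj w y := mem_nbr.mp (Finset.mem_sdiff.mp hyPw).1
        have hPy : PresP H u s k y := Or.inr (Or.inr (by
          rw [hydef, pc_phi hcyc hu' hMP hw hmMw]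
          exact Finset.singleton_nonempty m))
        refine ⟨y, hadj, ?_⟩
        rw [col_pres hPy, hydef, presColor_phi hcyc hu' hMP hw hmMw]
  refine ⟨⟨?_, ?_, ?_⟩, u, hcolu, ?_, ?_⟩
  · intro v
    have := col_mem_Icc hcyc hclq hu' hcard hMP v
    rw [Finset.mem_Icc] at this
    rw [Set.mem_Icc]
    exact this
  · intro a b hadj
    exact col_proper hcyc hclq hu' hcard hMP hadj
  · intro j hj
    rw [Set.mem_Icc] at hj
    by_cases hjk : j = k + 1
    · exact ⟨u, by rw [hcolu, hjk]⟩
    · obtain ⟨w, hw, hcw⟩ := hwitness j hj.1 (by omega)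
      exact ⟨w, hcw⟩
  · -- u is a b-vertex
    intro j hj hjne
    rw [Set.mem_Icc] at hj
    rw [hcolu] at hjne
    obtain ⟨w, hw, hcw⟩ := hwitness j hj.1 (by omega)
    exact ⟨w, hu' hw, hcw⟩
  · -- nice: b-vertex neighbors of each color
    intro j hj hjne
    rw [Set.mem_Icc] at hj
    rw [hcolu] at hjne
    obtain ⟨w, hw, hcw⟩ := hwitness j hj.1 (by omega)
    exact ⟨w, hu' hw, hcw, hbw w hw⟩

end Construction

section Bounds

variable [Fintype W] (H : SimpleGraph W)

lemma mset_bddAbove : BddAbove {k | ∃ (u : W) (s : Finset W), (↑s : Set W) ⊆ H.neighborSet u ∧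
    s.card = k ∧ ∀ v ∈ s, k ≤ (H.neighborSet v).ncard} := by
  refine ⟨Fintype.card W, ?_⟩
  rintro k ⟨u, s, hs, rfl, hdeg⟩
  exact Finset.card_le_card (Finset.subset_univ s)

lemma mset_zero_mem [Nonempty W] : 0 ∈ {k | ∃ (u : W) (s : Finset W),
    (↑s : Set W) ⊆ H.neighborSet u ∧ s.card = k ∧ ∀ v ∈ s, k ≤ (H.neighborSet v).ncard} := by
  exact ⟨Classical.arbitrary W, ∅, by simp, by simp, by simp⟩

lemma clique_le_mStar [Nonempty W] (t : Finset W) (ht : H.IsClique ↑t) :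
    t.card ≤ mStar H + 1 := by
  classical
  by_contra hc
  push_neg at hc
  obtain ⟨u, hu⟩ : t.Nonempty := Finset.card_pos.mp (by omega)
  have h1 : mStar H + 1 ≤ (t.erase u).card := by
    rw [Finset.card_erase_of_mem hu]; omega
  obtain ⟨s, hs, hscard⟩ := Finset.exists_subset_card_eq h1
  have hmem : mStar H + 1 ∈ {k | ∃ (u : W) (s : Finset W),
      (↑s : Set W) ⊆ H.neighborSet u ∧ s.card = k ∧ ∀ v ∈ s, k ≤ (H.neighborSet v).ncard} := by
    refine ⟨u, s, ?_, hscard, ?_⟩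
    · intro v hv
      rw [Finset.mem_coe] at hv
      have hvt := hs hv
      exact ht hu (Finset.mem_of_mem_erase hvt) (Finset.ne_of_mem_erase hvt).symm
    · intro v hv
      have hvt : v ∈ t := Finset.mem_of_mem_erase (hs hv)
      have hsub : (↑(t.erase v) : Set W) ⊆ H.neighborSet v := by
        intro z hz
        rw [Finset.coe_erase, Set.mem_diff] at hz
        exact (H.mem_neighborSet v z).mpr (ht hvt (Finset.mem_coe.mp hz.1)
          (fun h => hz.2 (h ▸ rfl)))
      have h2 := Set.ncard_le_ncard hsub (Set.toFinite _)
      rw [Set.ncard_coe_finset, Finset.card_erase_of_mem hvt] at h2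
      omega
  have h3 : mStar H + 1 ≤ mStar H := le_csSup (mset_bddAbove H) hmem
  omega

lemma bStar_le_mStar_succ [Nonempty W] : bStar H ≤ mStar H + 1 := by
  rw [bStar]
  by_cases hne : {k | ∃ c : W → ℕ, IsBStarColoring H k c}.Nonempty
  · refine csSup_le hne ?_
    rintro k ⟨c, ⟨hrange, hproper, hsurj⟩, v, hcv, hbv, hnice⟩
    by_cases hk1 : k ≤ 1
    · omega
    · classical
      have hpick : ∀ j ∈ Finset.Icc 1 (k-1), ∃ w, H.Adj v w ∧ c w = j ∧
          IsBVertex H k c w := by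
        intro j hj
        rw [Finset.mem_Icc] at hj
        exact hnice j (Set.mem_Icc.mpr ⟨hj.1, by omega⟩) (by rw [hcv]; omega)
      choose g hg1 hg2 hg3 using hpick
      have htcard : ((Finset.Icc 1 (k-1)).attach.image (fun j => g j.1 j.2)).card = k - 1 := by
        rw [Finset.card_image_of_injOn]
        · rw [Finset.card_attach, Nat.card_Icc]; omega
        · intro a _ b _ hab
          have h' : g a.1 a.2 = g b.1 b.2 := hab
          have h'' := congrArg c h'
          rw [hg2, hg2] at h''
          exact Subtype.ext h''
      have hmem : k - 1 ∈ {m | ∃ (u : W) (s : Finset W),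
          (↑s : Set W) ⊆ H.neighborSet u ∧ s.card = m ∧
          ∀ w ∈ s, m ≤ (H.neighborSet w).ncard} := by
        refine ⟨v, _, ?_, htcard, ?_⟩
        · intro w hw
          rw [Finset.mem_coe, Finset.mem_image] at hw
          obtain ⟨j, _, rfl⟩ := hw
          exact hg1 j.1 j.2
        · intro w hw
          rw [Finset.mem_image] at hw
          obtain ⟨j, _, rfl⟩ := hw
          have hbw := hg3 j.1 j.2
          have hcwlt : c (g j.1 j.2) ∈ Finset.Icc 1 k := by
            have h1 := hg2 j.1 j.2
            have hj := j.2
            rw [Finset.mem_Icc] at hj ⊢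
            omega
          have hpick2 : ∀ m ∈ (Finset.Icc 1 k).erase (c (g j.1 j.2)),
              ∃ z, H.Adj (g j.1 j.2) z ∧ c z = m := by
            intro m hm
            rw [Finset.mem_erase, Finset.mem_Icc] at hm
            exact hbw m (Set.mem_Icc.mpr hm.2) hm.1
          choose g2 hg21 hg22 using hpick2
          have ht2card : (((Finset.Icc 1 k).erase (c (g j.1 j.2))).attach.image
              (fun m => g2 m.1 m.2)).card = k - 1 := by
            rw [Finset.card_image_of_injOn]
            · rw [Finset.card_attach, Finset.card_erase_of_mem hcwlt, Nat.card_Icc]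
              omega
            · intro a _ b _ hab
              have h' : g2 a.1 a.2 = g2 b.1 b.2 := hab
              have h'' := congrArg c h'
              rw [hg22, hg22] at h''
              exact Subtype.ext h''
          have hsub2 : (↑(((Finset.Icc 1 k).erase (c (g j.1 j.2))).attach.image
              (fun m => g2 m.1 m.2)) : Set W) ⊆ H.neighborSet (g j.1 j.2) := by
            intro z hz
            rw [Finset.mem_coe, Finset.mem_image] at hz
            obtain ⟨m, _, rfl⟩ := hz
            exact hg21 m.1 m.2
          have h5 := Set.ncard_le_ncard hsub2 (Set.toFinite _)
          rw [Set.ncard_coe_finset, ht2card] at h5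
          omega
      have h6 : k - 1 ≤ mStar H := le_csSup (mset_bddAbove H) hmem
      omega
  · rw [Set.not_nonempty_iff_eq_empty] at hne
    rw [hne, csSup_empty]
    simp

lemma bset_bddAbove : BddAbove {k | ∃ c : W → ℕ, IsBStarColoring H k c} := by
  classical
  refine ⟨Fintype.card W + 1, ?_⟩
  rintro k ⟨c, ⟨hrange, hproper, hsurj⟩, -⟩
  by_cases hk0 : k = 0
  · omega
  · have hpick : ∀ j ∈ Finset.Icc 1 k, ∃ z, c z = j := fun j hj => by
      rw [Finset.mem_Icc] at hj
      exact hsurj j (Set.mem_Icc.mpr hj)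
    choose g hg using hpick
    have hcard : ((Finset.Icc 1 k).attach.image (fun j => g j.1 j.2)).card = k := by
      rw [Finset.card_image_of_injOn]
      · rw [Finset.card_attach, Nat.card_Icc]; omega
      · intro a _ b _ hab
        have h' : g a.1 a.2 = g b.1 b.2 := hab
        have h'' := congrArg c h'
        rw [hg, hg] at h''
        exact Subtype.ext h''
    have := Finset.card_le_card (Finset.subset_univ
      ((Finset.Icc 1 k).attach.image (fun j => g j.1 j.2)))
    rw [hcard, Finset.card_univ] at this
    omega

lemma mStar_succ_le_bStar [Nonempty W] (hcyc : CliqueCycles H) :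
    mStar H + 1 ≤ bStar H := by
  classical
  letI : LinearOrder W := LinearOrder.lift' (fun x => ((Fintype.equivFin W x : Fin _) : ℕ))
    (fun a b hab => (Fintype.equivFin W).injective (Fin.ext hab))
  have hk : mStar H ∈ {k | ∃ (u : W) (s : Finset W), (↑s : Set W) ⊆ H.neighborSet u ∧
      s.card = k ∧ ∀ v ∈ s, k ≤ (H.neighborSet v).ncard} :=
    Nat.sSup_mem ⟨0, mset_zero_mem H⟩ (mset_bddAbove H)
  obtain ⟨u, s, hu', hcard, hdeg⟩ := hk
  have hclq : ∀ t : Finset W, H.IsClique ↑t → t.card ≤ mStar H + 1 :=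
    fun t ht => clique_le_mStar H t ht
  have hbs := exists_bstar_coloring hcyc hu' hcard hdeg hclq
  exact le_csSup (bset_bddAbove H) ⟨_, hbs⟩

end Bounds


lemma mStar_induce_mono [Fintype V] (G : SimpleGraph V) {s₁ s₂ : Set V} (hsub : s₂ ⊆ s₁)
    (hne : s₂.Nonempty) : mStar (G.induce s₂) ≤ mStar (G.induce s₁) := by
  classical
  haveI : Fintype ↥s₁ := Fintype.ofFinite _
  haveI : Fintype ↥s₂ := Fintype.ofFinite _
  haveI : Nonempty ↥s₂ := hne.to_subtype
  refine csSup_le_csSup (mset_bddAbove (G.induce s₁)) ⟨0, mset_zero_mem (G.induce s₂)⟩ ?_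
  rintro k ⟨u, t, ht, rfl, hdeg⟩
  refine ⟨Set.inclusion hsub u, t.image (Set.inclusion hsub), ?_, ?_, ?_⟩
  · intro v hv
    rw [Finset.mem_coe, Finset.mem_image] at hv
    obtain ⟨x, hx, rfl⟩ := hv
    have : (G.induce s₂).Adj u x := ht (Finset.mem_coe.mpr hx)
    exact this
  · rw [Finset.card_image_of_injective _ (Set.inclusion_injective hsub)]
  · intro v hv
    rw [Finset.mem_image] at hv
    obtain ⟨x, hx, rfl⟩ := hv
    have h1 := hdeg x hx
    have h2 : ((G.induce s₂).neighborSet x).ncard ≤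
        ((G.induce s₁).neighborSet (Set.inclusion hsub x)).ncard := by
      apply Set.ncard_le_ncard_of_injOn (Set.inclusion hsub)
      · intro z hz
        exact hz
      · exact fun a _ b _ hab => Set.inclusion_injective hsub hab
    omega

theorem blockGraph_bStar_monotonic' [Fintype V] (G : SimpleGraph V) (hbg : IsBlockGraph G) :
    ∀ s₁ s₂ : Set V, s₂ ⊆ s₁ → s₂.Nonempty →
      bStar (G.induce s₂) ≤ bStar (G.induce s₁) := by
  intro s₁ s₂ hsub hne
  haveI : Fintype ↥s₁ := Fintype.ofFinite _
  haveI : Fintype ↥s₂ := Fintype.ofFinite _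
  haveI : Nonempty ↥s₂ := hne.to_subtype
  haveI : Nonempty ↥s₁ := (hne.mono hsub).to_subtype
  have hcyc : CliqueCycles (G.induce s₁) := (cliqueCycles_of_isBlockGraph G hbg).induce s₁
  calc bStar (G.induce s₂) ≤ mStar (G.induce s₂) + 1 := bStar_le_mStar_succ _
    _ ≤ mStar (G.induce s₁) + 1 := by
        have := mStar_induce_mono G hsub hne
        omega
    _ ≤ bStar (G.induce s₁) := mStar_succ_le_bStar _ hcyc

end BStarAux

/-- every block graph is b*-monotonic: for nested induced subgraphs
`G[s₂] ⊆ G[s₁]` (with `s₂` nonempty), `b*(G[s₂]) ≤ b*(G[s₁])`. -/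
theorem blockGraph_bStar_monotonic [Fintype V] (G : SimpleGraph V) (hbg : IsBlockGraph G) :
    ∀ s₁ s₂ : Set V, s₂ ⊆ s₁ → s₂.Nonempty →
      bStar (G.induce s₂) ≤ bStar (G.induce s₁) :=
  BStarAux.blockGraph_bStar_monotonic' G hbg
end
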